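/- arXiv:1905.04671 — 2 statements merged into one kernel-verified Lean document; each statement's English description precedes it below -/
import Mathlib

section
/- Let c ∈ ℝ, let a be a P-periodic locally integrable weight satisfying (a*), and let g : [0,1] → ℝ be continuous satisfying (g*) and (g₁). Let λ > 0 and d ∈ (0,1). Then there exists R̄ = R̄(d) ∈ (d,1) such that for every R ∈ [R̄,1), every θ ∈ (0,1], every μ > 0, and every i ∈ {1,…,m}, if u is a non-negative solution of u'' + cu' + θ(λa⁺(x) − μa⁻(x))g(u) = 0 with values in [0,1] defined on I⁻_{i−1} ∪ I⁺_i ∪ I⁻_i (intervals taken cyclically modulo P) with max_{x∈I⁻_{i−1}∪I⁺_i∪I⁻_i} u(x) = max_{x∈I⁺_i} u(x) = R, then u(σ_{i+1}) ≥ R + θ(μ‖A^r_i‖_{L¹(I⁻_i)} χ(d,R) e^{−|c||I⁻_i|} − λ‖a‖_{L¹(I⁺_i)} Γ(R) e^{|c||I⁺_i ∪ I⁻_i|}|I⁺_i ∪ I⁻_i|) and u(τ_{i−1}) ≥ R + θ(μ‖A^l_{i−1}‖_{L¹(I⁻_{i−1})} χ(d,R) e^{−|c||I⁻_{i−1}|}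 − λ‖a‖_{L¹(I⁺_i)} Γ(R) e^{|c||I⁻_{i−1} ∪ I⁺_i|}|I⁻_{i−1} ∪ I⁺_i|). -/
open MeasureTheory Set Filter Topology

noncomputable section

/-- Carathéodory solution of `u'' + c u' + h(x, u(x)) = 0` on `J`:
`u` is C¹ on `J` with derivative `u'`, which is (locally) absolutely continuous with
a.e.-derivative `u''`, and the equation holds a.e. on `J`. -/
def CaraSol (c : ℝ) (h : ℝ → ℝ → ℝ) (u u' : ℝ → ℝ) (J : Set ℝ) : Prop :=
  (∀ x ∈ J, HasDerivWithinAt u (u' x) J x) ∧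
  ContinuousOn u' J ∧
  ∃ u'' : ℝ → ℝ,
    (∀ x ∈ J, ∀ y ∈ J, u' y - u' x = ∫ t in x..y, u'' t) ∧
    (∀ᵐ x ∂(volume.restrict J), u'' x + c * u' x + h x (u x) = 0)

/-- positive part `a⁺` of a weight -/
def pospart (a : ℝ → ℝ) : ℝ → ℝ := fun x => max (a x) 0

/-- negative part `a⁻` of a weight -/
def negpart (a : ℝ → ℝ) : ℝ → ℝ := fun x => max (-a x) 0

/-- the two-parameter weight `a_{λ,μ} = λ a⁺ - μ a⁻` -/
def awt (a : ℝ → ℝ) (lam mu : ℝ) : ℝ → ℝ := fun x => lam * pospart a x - mu * negpart a x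

/-- the critical ratio `μ#(λ) = λ ∫₀^P a⁺ / ∫₀^P a⁻` -/
def muSharp (a : ℝ → ℝ) (P lam : ℝ) : ℝ :=
  lam * (∫ x in (0:ℝ)..P, pospart a x) / (∫ x in (0:ℝ)..P, negpart a x)

/-- A `P`-periodic locally integrable weight satisfying `(a*)`, with `m` positivity
intervals `I⁺ᵢ = [σ i, τ i]` separated by negativity intervals `I⁻ᵢ = [τ i, σ (i+1)]`. -/
structure AStar (P : ℝ) (m : ℕ) (a : ℝ → ℝ) (σ τ : ℕ → ℝ) : Prop where
  hP : 0 < P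
  hm : 1 ≤ m
  periodic : ∀ x, a (x + P) = a x
  locint : LocallyIntegrable a volume
  σ_one : σ 1 = 0
  σ_last : σ (m + 1) = P
  lt_στ : ∀ i ∈ Finset.Icc 1 m, σ i < τ i
  lt_τσ : ∀ i ∈ Finset.Icc 1 m, τ i < σ (i + 1)
  pos_ae : ∀ i ∈ Finset.Icc 1 m, ∀ᵐ x ∂(volume.restrict (Icc (σ i) (τ i))), 0 ≤ a x
  pos_ne : ∀ i ∈ Finset.Icc 1 m, ¬ (∀ᵐ x ∂(volume.restrict (Icc (σ i) (τ i))), a x = 0)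
  neg_ae : ∀ i ∈ Finset.Icc 1 m, ∀ᵐ x ∂(volume.restrict (Icc (τ i) (σ (i + 1)))), a x ≤ 0
  neg_ne : ∀ i ∈ Finset.Icc 1 m, ¬ (∀ᵐ x ∂(volume.restrict (Icc (τ i) (σ (i + 1)))), a x = 0)

/-- condition `(g*)` -/
def Gstar (g : ℝ → ℝ) : Prop := g 0 = 0 ∧ g 1 = 0 ∧ ∀ u ∈ Ioo (0:ℝ) 1, 0 < g u

/-- condition `(g₀)`: `g(u)/u → 0` as `u → 0⁺` -/
def Gzero (g : ℝ → ℝ) : Prop := Tendsto (fun u => g u / u) (𝓝[>] (0:ℝ)) (𝓝 0)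

/-- condition `(g₁)`: `limsup_{u→1⁻} g(u)/(1-u) < ∞` -/
def Gone (g : ℝ → ℝ) : Prop := ∃ K : ℝ, ∀ᶠ u in 𝓝[<] (1:ℝ), g u / (1 - u) ≤ K

/-- `P`-periodic Carathéodory solution of `u'' + c u' + w(x) g(u) = 0` on `ℝ`. -/
def PerSol (c : ℝ) (w g u u' : ℝ → ℝ) (P : ℝ) : Prop :=
  CaraSol c (fun x v => w x * g v) u u' univ ∧ ∀ x, u (x + P) = u x

section Helpers

lemma tri {a b : ℝ} (hab : a ≤ b) {f h : ℝ → ℝ}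
    (hf : IntegrableOn f (Icc a b)) (hh : IntegrableOn h (Icc a b)) :
    ∫ s in a..b, f s * ∫ t in a..s, h t = ∫ t in a..b, (∫ s in t..b, f s) * h t := by
  set μ := volume.restrict (Icc a b) with hμ
  have hfinm : IsFiniteMeasure μ := ⟨by
    rw [hμ, Measure.restrict_apply_univ]; exact measure_Icc_lt_top⟩
  set S : Set (ℝ × ℝ) := {p : ℝ × ℝ | p.2 ≤ p.1} with hS
  have hSm : MeasurableSet S := measurableSet_le measurable_snd measurable_fst
  set F : ℝ × ℝ → ℝ := S.indicator (fun p => f p.1 * h p.2) with hF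
  have hG : Integrable (fun p : ℝ × ℝ => f p.1 * h p.2) (μ.prod μ) :=
    Integrable.mul_prod hf hh
  have hFi : Integrable F (μ.prod μ) := hG.indicator hSm
  have swap : ∫ s, (∫ t, F (s, t) ∂μ) ∂μ = ∫ t, (∫ s, F (s, t) ∂μ) ∂μ :=
    integral_integral_swap (f := fun s t => F (s, t)) hFi
  have hL : ∀ s ∈ Icc a b, (∫ t, F (s, t) ∂μ) = f s * ∫ t in a..s, h t := by
    intro s hs
    have h1 : (fun t => F (s, t)) = (Iic s).indicator (fun t => f s * h t) := by
      funext t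
      by_cases h' : t ≤ s <;> simp [hF, hS, Set.indicator, h']
    rw [h1, integral_indicator measurableSet_Iic, hμ,
      Measure.restrict_restrict measurableSet_Iic]
    have h2 : Iic s ∩ Icc a b = Icc a s := by
      ext x; simp only [mem_inter_iff, mem_Iic, mem_Icc]
      exact ⟨fun ⟨h1', h2', _⟩ => ⟨h2', h1'⟩, fun ⟨h1', h2'⟩ => ⟨h2', h1', h2'.trans hs.2⟩⟩
    rw [h2, integral_Icc_eq_integral_Ioc, ← intervalIntegral.integral_of_le hs.1,
      ← intervalIntegral.integral_const_mul]
  have hR : ∀ t ∈ Icc a b, (∫ s, F (s, t) ∂μ) = (∫ s in t..b, f s) * h t := by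
    intro t ht
    have h1 : (fun s => F (s, t)) = (Ici t).indicator (fun s => f s * h t) := by
      funext s
      by_cases h' : t ≤ s <;> simp [hF, hS, Set.indicator, h']
    rw [h1, integral_indicator measurableSet_Ici, hμ,
      Measure.restrict_restrict measurableSet_Ici]
    have h2 : Ici t ∩ Icc a b = Icc t b := by
      ext x; simp only [mem_inter_iff, mem_Ici, mem_Icc]
      exact ⟨fun ⟨h1', _, h3'⟩ => ⟨h1', h3'⟩, fun ⟨h1', h2'⟩ => ⟨h1', ht.1.trans h1', h2'⟩⟩
    rw [h2, integral_Icc_eq_integral_Ioc, ← intervalIntegral.integral_of_le ht.2,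
      ← intervalIntegral.integral_mul_const]
  calc ∫ s in a..b, f s * ∫ t in a..s, h t
      = ∫ s in Icc a b, f s * ∫ t in a..s, h t := by
        rw [intervalIntegral.integral_of_le hab, integral_Icc_eq_integral_Ioc]
    _ = ∫ s, (∫ t, F (s, t) ∂μ) ∂μ := by
        rw [hμ]
        exact (setIntegral_congr_fun measurableSet_Icc (fun s hs => (hL s hs).symm))
    _ = ∫ t, (∫ s, F (s, t) ∂μ) ∂μ := swap
    _ = ∫ t in Icc a b, (∫ s in t..b, f s) * h t := by
        rw [hμ]
        exact (setIntegral_congr_fun measurableSet_Icc (fun t ht => (hR t ht)))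
    _ = ∫ t in a..b, (∫ s in t..b, f s) * h t := by
        rw [intervalIntegral.integral_of_le hab, integral_Icc_eq_integral_Ioc]

lemma expcont (c : ℝ) : Continuous (fun s : ℝ => Real.exp (c * s)) :=
  Real.continuous_exp.comp (continuous_const.mul continuous_id)

lemma expderiv (c s : ℝ) : HasDerivAt (fun s => Real.exp (c * s)) (c * Real.exp (c * s)) s := by
  exact ((Real.hasDerivAt_exp (c * s)).comp s ((hasDerivAt_id s).const_mul c)).congr_deriv (by ring)

lemma expInt (c x y : ℝ) :
    ∫ s in x..y, c * Real.exp (c * s) = Real.exp (c * y) - Real.exp (c * x) := by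
  rw [intervalIntegral.integral_eq_sub_of_hasDerivAt (fun s _ => expderiv c s)]
  exact (continuous_const.mul (expcont c)).intervalIntegrable x y

lemma parts (c : ℝ) {a b : ℝ} (hab : a ≤ b) {h : ℝ → ℝ} (hh : IntegrableOn h (Icc a b)) :
    ∫ s in a..b, (c * Real.exp (c * s)) * (∫ t in a..s, h t) =
      Real.exp (c * b) * (∫ t in a..b, h t) - ∫ t in a..b, Real.exp (c * t) * h t := by
  have hii : IntervalIntegrable h volume a b := by
    rw [intervalIntegrable_iff_integrableOn_Icc_of_le hab]; exact hh
  have hfc : IntegrableOn (fun s => c * Real.exp (c * s)) (Icc a b) :=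
    (continuous_const.mul (expcont c)).integrableOn_Icc
  rw [tri hab hfc hh]
  have he : ∀ t : ℝ, (∫ s in t..b, c * Real.exp (c * s)) = Real.exp (c * b) - Real.exp (c * t) :=
    fun t => expInt c t b
  simp_rw [he, sub_mul]
  rw [intervalIntegral.integral_sub (hii.const_mul _)
    (hii.continuousOn_mul ((expcont c).continuousOn)),
    intervalIntegral.integral_const_mul]

lemma mult {α β c : ℝ} {u' f : ℝ → ℝ}
    (hu' : ContinuousOn u' (Icc α β)) (hf : IntegrableOn f (Icc α β))
    (heq : ∀ x ∈ Icc α β, ∀ y ∈ Icc α β, u' y - u' x = ∫ t in x..y, -(c * u' t + f t)) :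
    ∀ x ∈ Icc α β, ∀ y ∈ Icc α β, x ≤ y →
      Real.exp (c * y) * u' y - Real.exp (c * x) * u' x
        = -∫ t in x..y, Real.exp (c * t) * f t := by
  intro x hx y hy hxy
  have hsub : Icc x y ⊆ Icc α β := Icc_subset_Icc hx.1 hy.2
  have hfxy : IntegrableOn f (Icc x y) := hf.mono_set hsub
  have hu'xy : ContinuousOn u' (Icc x y) := hu'.mono hsub
  have hfii : IntervalIntegrable f volume x y := by
    rw [intervalIntegrable_iff_integrableOn_Icc_of_le hxy]; exact hfxy
  set h : ℝ → ℝ := fun t => -(c * u' t + f t) with hh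
  have hhint : IntegrableOn h (Icc x y) := by
    apply Integrable.neg
    exact ((hu'xy.integrableOn_compact isCompact_Icc).const_mul c).add hfxy
  have hrep : ∀ t ∈ Icc x y, u' t = u' x + ∫ τ in x..t, h τ := by
    intro t ht
    have := heq x hx t (hsub ht)
    linarith [this]
  have hIcc : uIcc x y = Icc x y := uIcc_of_le hxy
  have hprimcont : ContinuousOn (fun t => ∫ τ in x..t, h τ) (Icc x y) := by
    have := intervalIntegral.continuousOn_primitive_interval (a := x) (b := y)
      (f := h) (μ := volume) (by rw [hIcc]; exact hhint)
    rwa [hIcc] at this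
  have step1 : ∫ s in x..y, (c * Real.exp (c * s)) * u' s
      = ∫ s in x..y, (c * Real.exp (c * s)) * (u' x + ∫ τ in x..s, h τ) := by
    apply intervalIntegral.integral_congr
    intro s hs
    rw [hIcc] at hs
    dsimp only
    rw [← hrep s hs]
  have step2 : ∫ s in x..y, (c * Real.exp (c * s)) * (u' x + ∫ τ in x..s, h τ)
      = (Real.exp (c * y) - Real.exp (c * x)) * u' x
        + (Real.exp (c * y) * (∫ t in x..y, h t) - ∫ t in x..y, Real.exp (c * t) * h t) := by
    have hint1 : IntervalIntegrable (fun s => (c * Real.exp (c * s)) * u' x) volume x y :=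
      ((continuous_const.mul (expcont c)).intervalIntegrable x y).mul_const _
    have hint2 : IntervalIntegrable (fun s => (c * Real.exp (c * s)) * ∫ τ in x..s, h τ)
        volume x y := by
      apply IntervalIntegrable.mul_continuousOn
        ((continuous_const.mul (expcont c)).intervalIntegrable x y)
      rw [hIcc]; exact hprimcont
    simp_rw [mul_add]
    rw [intervalIntegral.integral_add hint1 hint2, intervalIntegral.integral_mul_const,
      expInt c x y, parts c hxy hhint]
  have hru : u' y - u' x = ∫ t in x..y, h t := heq x hx y hy
  have hexp : ∫ t in x..y, Real.exp (c * t) * h t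
      = -(∫ t in x..y, c * Real.exp (c * t) * u' t) - ∫ t in x..y, Real.exp (c * t) * f t := by
    have e1 : ∀ t : ℝ, Real.exp (c * t) * h t
        = -(c * Real.exp (c * t) * u' t) - Real.exp (c * t) * f t := by
      intro t; simp [hh]; ring
    simp_rw [e1]
    rw [intervalIntegral.integral_sub, intervalIntegral.integral_neg]
    · exact (((continuous_const.mul (expcont c)).intervalIntegrable x y).mul_continuousOn
        (by rw [hIcc]; exact hu'xy)).neg
    · exact hfii.continuousOn_mul ((expcont c).continuousOn)
  have final := step1.trans step2
  rw [hexp, ← hru] at final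
  have heq2 : ∫ s in x..y, c * Real.exp (c * s) * u' s
      = ∫ s in x..y, (c * Real.exp (c * s)) * u' s := by norm_num
  rw [heq2] at final
  linarith [final]

lemma gnonneg {g : ℝ → ℝ} (hgs : Gstar g) : ∀ v ∈ Icc (0:ℝ) 1, 0 ≤ g v := by
  intro v hv
  rcases eq_or_lt_of_le hv.1 with h0 | h0
  · rw [← h0, hgs.1]
  rcases eq_or_lt_of_le hv.2 with h1 | h1
  · rw [h1, hgs.2.1]
  · exact (hgs.2.2 v ⟨h0, h1⟩).le

lemma getL {g : ℝ → ℝ} (hg : ContinuousOn g (Icc 0 1)) (hgs : Gstar g) (hg1 : Gone g) :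
    ∃ L : ℝ, 0 ≤ L ∧ ∀ v ∈ Icc (0:ℝ) 1, g v ≤ L * (1 - v) := by
  obtain ⟨K, hK⟩ := hg1
  rw [eventually_nhdsWithin_iff, Metric.eventually_nhds_iff] at hK
  obtain ⟨δ, hδ0, hδ⟩ := hK
  set M := sSup (g '' Icc (0:ℝ) 1) with hM
  have hcpt : IsCompact (g '' Icc (0:ℝ) 1) := isCompact_Icc.image_of_continuousOn hg
  have hMle : ∀ v ∈ Icc (0:ℝ) 1, g v ≤ M :=
    fun v hv => le_csSup hcpt.bddAbove (mem_image_of_mem g hv)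
  have hM0 : 0 ≤ M := by
    have := hMle 0 ⟨le_refl 0, zero_le_one⟩; rw [hgs.1] at this; exact this
  refine ⟨max (max K (M / δ)) 0, le_max_right _ _, ?_⟩
  set L := max (max K (M / δ)) 0 with hL
  intro v hv
  rcases eq_or_lt_of_le hv.2 with h1 | h1
  · rw [h1, hgs.2.1]; simp
  have h1v : 0 < 1 - v := by linarith
  by_cases hc : 1 - v < δ
  · have hdd : dist v 1 < δ := by rw [Real.dist_eq, abs_of_nonpos (by linarith)]; linarith
    have h2 := hδ hdd h1
    have hKv : g v ≤ K * (1 - v) := by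
      rw [div_le_iff₀ h1v] at h2; linarith
    calc g v ≤ K * (1 - v) := hKv
      _ ≤ L * (1 - v) := by
          apply mul_le_mul_of_nonneg_right _ h1v.le
          exact le_trans (le_max_left _ _) (le_max_left _ _)
  · push_neg at hc
    calc g v ≤ M := hMle v hv
      _ = (M / δ) * δ := by field_simp
      _ ≤ (M / δ) * (1 - v) := by
          apply mul_le_mul_of_nonneg_left hc (div_nonneg hM0 hδ0.le)
      _ ≤ L * (1 - v) := by
          apply mul_le_mul_of_nonneg_right _ h1v.le
          exact le_trans (le_max_right _ _) (le_max_left _ _)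

lemma aeshift {P A B : ℝ} {a : ℝ → ℝ} (hper : ∀ x, a (x + P) = a x)
    (p : ℝ → Prop) (hae : ∀ᵐ x ∂(volume.restrict (Icc A B)), p (a x)) :
    ∀ᵐ x ∂(volume.restrict (Icc (A - P) (B - P))), p (a x) := by
  rw [ae_restrict_iff' measurableSet_Icc] at hae ⊢
  have hmp : MeasurePreserving (fun x : ℝ => x + P) volume volume :=
    measurePreserving_add_right volume P
  have h2 := hmp.quasiMeasurePreserving.ae hae
  filter_upwards [h2] with x hx hmem
  have := hx ⟨by linarith [hmem.1], by linarith [hmem.2]⟩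
  rwa [hper x] at this

lemma intervalIntegral_congr_ae_restrict {x y : ℝ} {f g : ℝ → ℝ} (hxy : x ≤ y)
    (h : f =ᵐ[volume.restrict (Icc x y)] g) : ∫ t in x..y, f t = ∫ t in x..y, g t := by
  apply intervalIntegral.integral_congr_ae
  have h2 := (ae_restrict_iff' measurableSet_Icc).mp h
  filter_upwards [h2] with t ht hmem
  apply ht
  rw [uIoc_of_le hxy] at hmem
  exact Ioc_subset_Icc_self hmem

end Helpers

set_option maxHeartbeats 4000000 in
/-- Lemma 2.8 (lem-R): estimates for large solutions on `I⁻_{i-1} ∪ I⁺_i ∪ I⁻_i`.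
Here `Γ(R) = max_{0 ≤ v ≤ R} g(v)`, `χ(d,R) = min_{d ≤ v ≤ R} g(v)`,
`A^r_i(x) = ∫_{τ_i}^x a⁻`, `A^l_{i-1}(x) = ∫_x^{σ_i} a⁻`, intervals cyclic
(`τ 0 = τ m - P`). -/
theorem statement13 (c P : ℝ) (m : ℕ) (a : ℝ → ℝ) (σ τ : ℕ → ℝ)
    (ha : AStar P m a σ τ) (hτ0 : τ 0 = τ m - P)
    (g : ℝ → ℝ) (hg : ContinuousOn g (Icc 0 1)) (hgs : Gstar g) (hg1 : Gone g)
    (lam d : ℝ) (hlam : 0 < lam) (hd : d ∈ Ioo (0:ℝ) 1) :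
    ∃ Rbar ∈ Ioo d 1, ∀ R ∈ Ico Rbar 1, ∀ θ ∈ Ioc (0:ℝ) 1, ∀ mu : ℝ, 0 < mu →
      ∀ i ∈ Finset.Icc 1 m, ∀ u u' : ℝ → ℝ,
        CaraSol c (fun x v => θ * awt a lam mu x * g v) u u'
          (Icc (τ (i - 1)) (σ (i + 1))) →
        (∀ x ∈ Icc (τ (i - 1)) (σ (i + 1)), u x ∈ Icc (0:ℝ) 1) →
        sSup (u '' Icc (τ (i - 1)) (σ (i + 1))) = R →
        sSup (u '' Icc (σ i) (τ i)) = R →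
        (u (σ (i + 1)) ≥ R + θ *
          (mu * (∫ x in Icc (τ i) (σ (i + 1)), |∫ t in (τ i)..x, negpart a t|) *
              sInf (g '' Icc d R) * Real.exp (-(|c| * (σ (i + 1) - τ i))) -
            lam * (∫ x in Icc (σ i) (τ i), |a x|) * sSup (g '' Icc (0:ℝ) R) *
              Real.exp (|c| * (σ (i + 1) - σ i)) * (σ (i + 1) - σ i))) ∧
        (u (τ (i - 1)) ≥ R + θ *
          (mu * (∫ x in Icc (τ (i - 1)) (σ i), |∫ t in x..(σ i), negpart a t|) *
              sInf (g '' Icc d R) * Real.exp (-(|c| * (σ i - τ (i - 1)))) -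
            lam * (∫ x in Icc (σ i) (τ i), |a x|) * sSup (g '' Icc (0:ℝ) R) *
              Real.exp (|c| * (τ i - τ (i - 1))) * (τ i - τ (i - 1))))  := by
  classical
  obtain ⟨L, hL0, hL⟩ := getL hg hgs hg1
  have hg0 := gnonneg hgs
  have hP := ha.hP
  set E := Real.exp (|c| * (2 * P)) with hEdef
  have hE0 : 0 < E := Real.exp_pos _
  have hE1 : 1 ≤ E := Real.one_le_exp (mul_nonneg (abs_nonneg c) (by linarith))
  set N := ∫ x in Icc (-P) P, |a x| with hNdef
  have hN0 : 0 ≤ N := integral_nonneg (fun x => abs_nonneg _)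
  set C2 := Real.exp (E * lam * L * N * (2 * P)) with hC2def
  have hC21 : 1 ≤ C2 := Real.one_le_exp
    (mul_nonneg (mul_nonneg (mul_nonneg (mul_nonneg hE0.le hlam.le) hL0) hN0) (by linarith))
  have hC20 : 0 < C2 := Real.exp_pos _
  set C3 := E * lam * L * N * C2 with hC3def
  have hC30 : 0 ≤ C3 := by
    rw [hC3def]
    exact mul_nonneg (mul_nonneg (mul_nonneg (mul_nonneg hE0.le hlam.le) hL0) hN0) hC20.le
  set C4 := C2 + 2 * P * E * C3 with hC4def
  have hC40 : 0 < C4 := by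
    have h1 : 0 ≤ 2 * P * E * C3 :=
      mul_nonneg (mul_nonneg (by linarith) hE0.le) hC30
    rw [hC4def]; linarith
  have hd0 := hd.1
  have hd1 := hd.2
  refine ⟨max ((1 + d) / 2) (1 - (1 - d) / (C4 + 1)), ⟨?_, ?_⟩, ?_⟩
  · exact lt_max_iff.mpr (Or.inl (by linarith))
  · apply max_lt
    · linarith
    · have : 0 < (1 - d) / (C4 + 1) := div_pos (by linarith) (by linarith)
      linarith
  intro R hR θ hθ mu hmu i hi u u' hsol hrange hsupJ hsupI
  obtain ⟨hRbar, hR1⟩ := hR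
  have hRd : d < R := lt_of_lt_of_le (by linarith : d < (1 + d) / 2)
    (le_trans (le_max_left _ _) hRbar)
  have h1R : 1 - R ≤ (1 - d) / (C4 + 1) := by
    have := le_trans (le_max_right _ _) hRbar
    linarith
  have hR0 : 0 < R := lt_trans hd0 hRd
  obtain ⟨hi1, him⟩ := Finset.mem_Icc.mp hi
  set A := τ (i - 1) with hAdef
  set S := σ i with hSdef
  set T := τ i with hTdef
  set B := σ (i + 1) with hBdef
  have hστ : ∀ j, 1 ≤ j → j ≤ m → σ j < τ j :=
    fun j h1 h2 => ha.lt_στ j (Finset.mem_Icc.mpr ⟨h1, h2⟩)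
  have hτσ : ∀ j, 1 ≤ j → j ≤ m → τ j < σ (j + 1) :=
    fun j h1 h2 => ha.lt_τσ j (Finset.mem_Icc.mpr ⟨h1, h2⟩)
  have hmono : ∀ k, k ≤ m + 1 → ∀ j, 1 ≤ j → j ≤ k → σ j ≤ σ k := by
    intro k
    induction k with
    | zero => intro _ j hj hjk; exact absurd (hj.trans hjk) (by omega)
    | succ n ih =>
      intro hk j hj hjk
      rcases Nat.lt_or_ge j (n + 1) with hlt | hge
      · have hjn : j ≤ n := by omega
        have h1n : 1 ≤ n := by omega
        have h1 : σ j ≤ σ n := ih (by omega) j hj hjn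
        have h2 : σ n < τ n := hστ n h1n (by omega)
        have h3 : τ n < σ (n + 1) := hτσ n h1n (by omega)
        linarith
      · have hje : j = n + 1 := by omega
        rw [hje]
  have hσ0 : ∀ k, 1 ≤ k → k ≤ m + 1 → 0 ≤ σ k := by
    intro k h1 h2
    have := hmono k h2 1 le_rfl h1
    rwa [ha.σ_one] at this
  have hσP : ∀ k, 1 ≤ k → k ≤ m + 1 → σ k ≤ P := by
    intro k h1 h2
    have := hmono (m + 1) le_rfl k h1 h2
    rwa [ha.σ_last] at this
  have hST : S < T := hστ i hi1 him
  have hTB : T < B := hτσ i hi1 him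
  have hS0 : 0 ≤ S := hσ0 i hi1 (by omega)
  have hBP : B ≤ P := hσP (i + 1) (by omega) (by omega)
  have hm1 := ha.hm
  have hτmP : 0 ≤ τ m ∧ τ m < P := by
    constructor
    · linarith [hσ0 m hm1 (by omega), hστ m hm1 le_rfl]
    · have := hτσ m hm1 le_rfl
      rwa [ha.σ_last] at this
  have hkey1 : A < S ∧ -P ≤ A ∧ (∀ᵐ x ∂(volume.restrict (Icc A S)), a x ≤ 0) := by
    rcases eq_or_lt_of_le hi1 with h1 | h2
    · -- i = 1
      have hi1' : i = 1 := h1.symm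
      have hA0 : A = τ m - P := by rw [hAdef, hi1', Nat.sub_self, hτ0]
      have hS' : S = 0 := by rw [hSdef, hi1', ha.σ_one]
      refine ⟨by rw [hA0, hS']; linarith [hτmP.2], by rw [hA0]; linarith [hτmP.1], ?_⟩
      have hae := aeshift (P := P) ha.periodic (fun v => v ≤ 0) (ha.neg_ae m
        (Finset.mem_Icc.mpr ⟨hm1, le_rfl⟩))
      rw [ha.σ_last] at hae
      have hPP : P - P = (0:ℝ) := by ring
      rw [hPP] at hae
      rw [hA0, hS']
      exact hae
    · -- i ≥ 2
      have hj1 : 1 ≤ i - 1 := by omega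
      have hjm : i - 1 ≤ m := by omega
      have hj : (i - 1) + 1 = i := by omega
      have h1 : τ (i - 1) < σ i := by
        have := hτσ (i - 1) hj1 hjm; rwa [hj] at this
      refine ⟨h1, ?_, ?_⟩
      · have := hσ0 (i - 1) hj1 (by omega)
        have h2 := hστ (i - 1) hj1 hjm
        rw [hAdef]; linarith
      · have := ha.neg_ae (i - 1) (Finset.mem_Icc.mpr ⟨hj1, hjm⟩)
        rwa [hj] at this
  obtain ⟨hAS, hPA, hnegL⟩ := hkey1
  have hposI : ∀ᵐ x ∂(volume.restrict (Icc S T)), 0 ≤ a x := ha.pos_ae i hi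
  have hnegR : ∀ᵐ x ∂(volume.restrict (Icc T B)), a x ≤ 0 := ha.neg_ae i hi
  have hAB : A ≤ B := by linarith
  have hJsub : Icc A B ⊆ Icc (-P) P := Icc_subset_Icc hPA (by linarith)
  have hTP : T ≤ P := by linarith
  -- CaraSol data
  obtain ⟨hderiv, hu'c, u'', hu''rep, hu''ae⟩ := hsol
  set w := fun x => θ * awt a lam mu x * g (u x) with hwdef
  have hucont : ContinuousOn u (Icc A B) := fun x hx => (hderiv x hx).continuousWithinAt
  have hur : ∀ x ∈ Icc A B, u x ∈ Icc (0:ℝ) 1 := hrange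
  have hgu : ContinuousOn (fun x => g (u x)) (Icc A B) := hg.comp hucont hur
  have hgu0 : ∀ x ∈ Icc A B, 0 ≤ g (u x) := fun x hx => hg0 (u x) (hur x hx)
  have haint : ∀ x y : ℝ, IntegrableOn a (Icc x y) :=
    fun x y => ha.locint.integrableOn_isCompact isCompact_Icc
  have hpint : ∀ x y : ℝ, IntegrableOn (pospart a) (Icc x y) := by
    intro x y
    have := (haint x y).pos_part
    exact this
  have hnint : ∀ x y : ℝ, IntegrableOn (negpart a) (Icc x y) := by
    intro x y
    have := (haint x y).neg.pos_part
    exact this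
  have hawtint : ∀ x y : ℝ, IntegrableOn (awt a lam mu) (Icc x y) := by
    intro x y
    have := ((hpint x y).const_mul lam).sub ((hnint x y).const_mul mu)
    exact this
  have hintII : ∀ {f : ℝ → ℝ}, (∀ x y : ℝ, IntegrableOn f (Icc x y)) →
      ∀ x y : ℝ, IntervalIntegrable f volume x y := by
    intro f hf x y
    rcases le_total x y with h | h
    · rw [intervalIntegrable_iff_integrableOn_Icc_of_le h]; exact hf x y
    · exact IntervalIntegrable.symm (by
        rw [intervalIntegrable_iff_integrableOn_Icc_of_le h]; exact hf y x)
  have hpII : ∀ x y : ℝ, IntervalIntegrable (pospart a) volume x y := hintII hpint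
  have hnII : ∀ x y : ℝ, IntervalIntegrable (negpart a) volume x y := hintII hnint
  have hawtII : ∀ x y : ℝ, IntervalIntegrable (awt a lam mu) volume x y := hintII hawtint
  have hwII : ∀ x y : ℝ, x ∈ Icc A B → y ∈ Icc A B → IntervalIntegrable w volume x y := by
    intro x y hx hy
    have hrw : w = fun z => (θ * g (u z)) * awt a lam mu z := by
      funext z; rw [hwdef]; ring
    rw [hrw]
    exact (hawtII x y).continuousOn_mul
      ((continuousOn_const.mul hgu).mono (uIcc_subset_Icc hx hy))
  have hwint : IntegrableOn w (Icc A B) := by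
    rw [← intervalIntegrable_iff_integrableOn_Icc_of_le hAB]
    exact hwII A B (left_mem_Icc.mpr hAB) (right_mem_Icc.mpr hAB)
  have hewII : ∀ x y : ℝ, x ∈ Icc A B → y ∈ Icc A B →
      IntervalIntegrable (fun ξ => Real.exp (c * ξ) * w ξ) volume x y := by
    intro x y hx hy
    exact (hwII x y hx hy).continuousOn_mul ((expcont c).continuousOn)
  have hkey : ∀ x ∈ Icc A B, ∀ y ∈ Icc A B,
      u' y - u' x = ∫ t in x..y, -(c * u' t + w t) := by
    intro x hx y hy
    rw [hu''rep x hx y hy]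
    apply intervalIntegral.integral_congr_ae
    have hae := (ae_restrict_iff' measurableSet_Icc).mp hu''ae
    filter_upwards [hae] with t ht hmem
    have htJ : t ∈ Icc A B := (uIcc_subset_Icc hx hy) (uIoc_subset_uIcc hmem)
    have h3 : u'' t + c * u' t + θ * awt a lam mu t * g (u t) = 0 := ht htJ
    show u'' t = -(c * u' t + θ * awt a lam mu t * g (u t))
    linarith
  have hmul := mult hu'c hwint hkey
  -- maximum point
  have hSTsub : Icc S T ⊆ Icc A B := Icc_subset_Icc hAS.le hTB.le
  obtain ⟨xh, hxhST, hxhmax⟩ := isCompact_Icc.exists_isMaxOn (nonempty_Icc.mpr hST.le)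
    (hucont.mono hSTsub)
  have hxhJ : xh ∈ Icc A B := hSTsub hxhST
  have hxhA : A < xh := lt_of_lt_of_le hAS hxhST.1
  have hxhB : xh < B := lt_of_le_of_lt hxhST.2 hTB
  have huxh : u xh = R := by
    rw [← hsupI]
    apply le_antisymm
    · exact le_csSup (isCompact_Icc.image_of_continuousOn (hucont.mono hSTsub)).bddAbove
        (mem_image_of_mem _ hxhST)
    · apply csSup_le ((nonempty_Icc.mpr hST.le).image u)
      rintro v ⟨z, hz, rfl⟩
      exact hxhmax hz
  have hleR : ∀ x ∈ Icc A B, u x ≤ R := by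
    intro x hx
    rw [← hsupJ]
    exact le_csSup (isCompact_Icc.image_of_continuousOn hucont).bddAbove
      (mem_image_of_mem _ hx)
  have hu'xh : u' xh = 0 := by
    have hDA : HasDerivAt u (u' xh) xh :=
      (hderiv xh hxhJ).hasDerivAt (Icc_mem_nhds hxhA hxhB)
    have hmax : IsLocalMax u xh := by
      have hmem : Icc A B ∈ 𝓝 xh := Icc_mem_nhds hxhA hxhB
      filter_upwards [hmem] with z hz
      rw [huxh]
      exact hleR z hz
    exact hmax.hasDerivAt_eq_zero hDA
  have hform : ∀ x ∈ Icc A B,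
      Real.exp (c * x) * u' x = -∫ ξ in xh..x, Real.exp (c * ξ) * w ξ := by
    intro x hx
    rcases le_total xh x with hxx | hxx
    · have h1 := hmul xh hxhJ x hx hxx
      rw [hu'xh] at h1
      simp only [mul_zero, sub_zero] at h1
      exact h1
    · have h1 := hmul x hx xh hxhJ hxx
      rw [hu'xh] at h1
      rw [intervalIntegral.integral_symm]
      simp only [mul_zero, zero_sub] at h1
      linarith
  have hform2 : ∀ x ∈ Icc A B,
      u' x = -(Real.exp (-(c * x)) * ∫ ξ in xh..x, Real.exp (c * ξ) * w ξ) := by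
    intro x hx
    have h1 := hform x hx
    have h2 : Real.exp (-(c * x)) * (Real.exp (c * x) * u' x) = u' x := by
      rw [← mul_assoc, ← Real.exp_add]; simp
    rw [← h2, h1]; ring
  have hidexp : ∀ x v : ℝ, Real.exp (-(c * x)) * (Real.exp (c * x) * v) = v := by
    intro x v; rw [← mul_assoc, ← Real.exp_add]; simp
  -- elementary bounds on pospart/negpart
  have hp0 : ∀ x, 0 ≤ pospart a x := fun x => le_max_right _ _
  have hn0 : ∀ x, 0 ≤ negpart a x := fun x => le_max_right _ _
  have hpabs : ∀ x, pospart a x ≤ |a x| := fun x => max_le (le_abs_self _) (abs_nonneg _)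
  have hnabs : ∀ x, negpart a x ≤ |a x| := fun x => max_le (neg_le_abs _) (abs_nonneg _)
  have hpN : ∀ x z : ℝ, -P ≤ x → z ≤ P → x ≤ z → ∫ ξ in x..z, pospart a ξ ≤ N := by
    intro x z h1 h2 h3
    rw [intervalIntegral.integral_of_le h3, hNdef]
    calc ∫ ξ in Ioc x z, pospart a ξ ≤ ∫ ξ in Icc (-P) P, pospart a ξ := by
          apply setIntegral_mono_set (hpint (-P) P)
            (Filter.Eventually.of_forall hp0)
            ((Ioc_subset_Icc_self.trans (Icc_subset_Icc h1 h2)).eventuallyLE)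
      _ ≤ ∫ ξ in Icc (-P) P, |a ξ| := by
          apply setIntegral_mono_on (hpint _ _) ((haint _ _).abs) measurableSet_Icc
          intro ξ _
          exact hpabs ξ
  -- a.e. sign facts for w
  have hwposST : ∀ᵐ ξ ∂(volume.restrict (Icc S T)), 0 ≤ w ξ := by
    filter_upwards [hposI, ae_restrict_mem measurableSet_Icc] with ξ h1 h2
    have hξJ : ξ ∈ Icc A B := hSTsub h2
    have hnz : negpart a ξ = 0 := max_eq_right (by linarith)
    have hawt : 0 ≤ awt a lam mu ξ := by
      simp only [awt, hnz, mul_zero, sub_zero]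
      exact mul_nonneg hlam.le (hp0 ξ)
    simp only [hwdef]
    exact mul_nonneg (mul_nonneg hθ.1.le hawt) (hgu0 ξ hξJ)
  have hwnegOn : ∀ (X Y : ℝ), Icc X Y ⊆ Icc A B →
      (∀ᵐ ξ ∂(volume.restrict (Icc X Y)), a ξ ≤ 0) →
      ∀ᵐ ξ ∂(volume.restrict (Icc X Y)), w ξ ≤ 0 := by
    intro X Y hsub hneg
    filter_upwards [hneg, ae_restrict_mem measurableSet_Icc] with ξ h1 h2
    have hξJ : ξ ∈ Icc A B := hsub h2
    have hpz : pospart a ξ = 0 := max_eq_right (by linarith)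
    have hawt : awt a lam mu ξ ≤ 0 := by
      simp only [awt, hpz, mul_zero, zero_sub, neg_nonpos]
      exact mul_nonneg hmu.le (hn0 ξ)
    simp only [hwdef]
    have h5 : θ * awt a lam mu ξ ≤ 0 := mul_nonpos_iff.mpr (Or.inl ⟨hθ.1.le, hawt⟩)
    exact mul_nonpos_iff.mpr (Or.inr ⟨h5, hgu0 ξ hξJ⟩)
  have hwnegTB : ∀ᵐ ξ ∂(volume.restrict (Icc T B)), w ξ ≤ 0 :=
    hwnegOn T B (Icc_subset_Icc (by linarith [hAS, hST]) le_rfl) hnegR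
  have hwnegAS : ∀ᵐ ξ ∂(volume.restrict (Icc A S)), w ξ ≤ 0 :=
    hwnegOn A S (Icc_subset_Icc le_rfl (by linarith)) hnegL
  -- pointwise bound w ≤ lam*L*(pospart*y)
  set y := fun x => 1 - u x with hydef
  have hycont : ContinuousOn y (Icc A B) := continuousOn_const.sub hucont
  have hy0 : ∀ x ∈ Icc A B, 0 ≤ y x := by
    intro x hx
    have := (hur x hx).2
    simp only [hydef]; linarith
  have hyd : ∀ x ∈ Ioo A B, HasDerivAt y (-(u' x)) x := by
    intro x hx
    have h1 : HasDerivAt u (u' x) x :=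
      (hderiv x (Ioo_subset_Icc_self hx)).hasDerivAt (Icc_mem_nhds hx.1 hx.2)
    simpa using h1.const_sub 1
  have hyxh : y xh = 1 - R := by simp only [hydef]; rw [huxh]
  have h1R0 : 0 ≤ 1 - R := by linarith
  have hwle : ∀ ξ ∈ Icc A B, w ξ ≤ lam * L * (pospart a ξ * y ξ) := by
    intro ξ hξ
    have h1 : w ξ = θ * (lam * pospart a ξ - mu * negpart a ξ) * g (u ξ) := by
      simp only [hwdef, awt]
    have h2 : θ * (mu * negpart a ξ) * g (u ξ) ≥ 0 :=
      mul_nonneg (mul_nonneg hθ.1.le (mul_nonneg hmu.le (hn0 ξ))) (hgu0 ξ hξ)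
    have h3 : θ * (lam * pospart a ξ) * g (u ξ) ≤ lam * pospart a ξ * g (u ξ) := by
      have h9 := mul_nonneg (mul_nonneg hlam.le (hp0 ξ)) (hgu0 ξ hξ)
      linarith only [mul_nonneg (sub_nonneg.mpr hθ.2) h9]
    have h4 : lam * pospart a ξ * g (u ξ) ≤ lam * pospart a ξ * (L * y ξ) := by
      apply mul_le_mul_of_nonneg_left _ (mul_nonneg hlam.le (hp0 ξ))
      have := hL (u ξ) (hur ξ hξ)
      simpa only [hydef] using this
    rw [h1]
    linarith only [h2, h3, h4]
  -- exponential bound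
  have habs2P : ∀ {x ξ : ℝ}, x ∈ Icc (-P) P → ξ ∈ Icc (-P) P → |ξ - x| ≤ 2 * P := by
    intro x ξ hx hξ
    rw [abs_le]
    constructor <;> [linarith [hx.2, hξ.1]; linarith [hx.1, hξ.2]]
  have hexpE : ∀ x ξ : ℝ, |ξ - x| ≤ 2 * P → Real.exp (-(c * x)) * Real.exp (c * ξ) ≤ E := by
    intro x ξ hle
    rw [← Real.exp_add, hEdef]
    apply Real.exp_le_exp.mpr
    calc -(c * x) + c * ξ = c * (ξ - x) := by ring
      _ ≤ |c * (ξ - x)| := le_abs_self _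
      _ = |c| * |ξ - x| := abs_mul c _
      _ ≤ |c| * (2 * P) := mul_le_mul_of_nonneg_left hle (abs_nonneg c)
  have hTJ : T ∈ Icc A B := ⟨by linarith, by linarith⟩
  have hSJ : S ∈ Icc A B := ⟨hAS.le, by linarith⟩
  -- Right-hand side bounds on [xh, T]
  have hbR : ∀ x ∈ Icc xh T, u' x ≤ 0 ∧
      -(u' x) ≤ E * lam * L * ∫ ξ in xh..x, pospart a ξ * y ξ := by
    intro x hx
    have hxJ : x ∈ Icc A B := ⟨le_trans hxhJ.1 hx.1, le_trans hx.2 hTJ.2⟩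
    have hxhx_sub : Icc xh x ⊆ Icc S T := Icc_subset_Icc hxhST.1 hx.2
    have hwpos_x : ∀ᵐ ξ ∂(volume.restrict (Icc xh x)), 0 ≤ w ξ :=
      ae_restrict_of_ae_restrict_of_subset hxhx_sub hwposST
    have hInn : 0 ≤ ∫ ξ in xh..x, Real.exp (c * ξ) * w ξ := by
      apply intervalIntegral.integral_nonneg_of_ae_restrict hx.1
      filter_upwards [hwpos_x] with ξ h1
      exact mul_nonneg (Real.exp_pos _).le h1
    have hf2 := hform2 x hxJ
    constructor
    · rw [hf2]
      have h9 := mul_nonneg (Real.exp_pos (-(c * x))).le hInn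
      linarith only [h9]
    · rw [hf2, neg_neg]
      rw [← intervalIntegral.integral_const_mul]
      calc ∫ ξ in xh..x, Real.exp (-(c * x)) * (Real.exp (c * ξ) * w ξ)
          ≤ ∫ ξ in xh..x, E * lam * L * (pospart a ξ * y ξ) := by
            apply intervalIntegral.integral_mono_on hx.1
            · exact ((hewII xh x hxhJ hxJ).const_mul _)
            · exact (((hpII xh x).mul_continuousOn
                (hycont.mono (uIcc_subset_Icc hxhJ hxJ))).const_mul _)
            intro ξ hξ
            have hξJ : ξ ∈ Icc A B := ⟨le_trans hxhJ.1 hξ.1, le_trans hξ.2 hxJ.2⟩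
            have hw1 : w ξ ≤ lam * L * (pospart a ξ * y ξ) := hwle ξ hξJ
            have hc1 : (0:ℝ) < Real.exp (-(c * x)) * Real.exp (c * ξ) :=
              mul_pos (Real.exp_pos _) (Real.exp_pos _)
            have hrhs0 : 0 ≤ lam * L * (pospart a ξ * y ξ) :=
              mul_nonneg (mul_nonneg hlam.le hL0) (mul_nonneg (hp0 ξ) (hy0 ξ hξJ))
            calc Real.exp (-(c * x)) * (Real.exp (c * ξ) * w ξ)
                = (Real.exp (-(c * x)) * Real.exp (c * ξ)) * w ξ := by ring
              _ ≤ (Real.exp (-(c * x)) * Real.exp (c * ξ)) * (lam * L * (pospart a ξ * y ξ)) :=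
                  mul_le_mul_of_nonneg_left hw1 hc1.le
              _ ≤ E * (lam * L * (pospart a ξ * y ξ)) :=
                  mul_le_mul_of_nonneg_right
                    (hexpE x ξ (habs2P (hJsub hxJ) (hJsub hξJ))) hrhs0
              _ = E * lam * L * (pospart a ξ * y ξ) := by ring
        _ = E * lam * L * ∫ ξ in xh..x, pospart a ξ * y ξ := by
            rw [← intervalIntegral.integral_const_mul]
  have hymonoR : MonotoneOn y (Icc xh T) := by
    apply monotoneOn_of_deriv_nonneg (convex_Icc _ _)
      (hycont.mono (Icc_subset_Icc hxhJ.1 hTJ.2))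
    · intro z hz
      rw [interior_Icc] at hz
      have hzIoo : z ∈ Ioo A B := ⟨lt_of_lt_of_le hxhA hz.1.le, lt_of_le_of_lt hz.2.le hTB⟩
      exact ((hyd z hzIoo).differentiableAt).differentiableWithinAt
    · intro z hz
      rw [interior_Icc] at hz
      have hzIoo : z ∈ Ioo A B := ⟨lt_of_lt_of_le hxhA hz.1.le, lt_of_le_of_lt hz.2.le hTB⟩
      rw [(hyd z hzIoo).deriv]
      have h9 := (hbR z (Ioo_subset_Icc_self hz)).1
      linarith only [h9]
  set Kp := fun x : ℝ => ∫ η in xh..x, pospart a η with hKpdef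
  have hKpcont : Continuous Kp := intervalIntegral.continuous_primitive (hpII) xh
  set Q := fun x : ℝ => E * lam * L * Kp x with hQdef
  have hQcont : Continuous Q := continuous_const.mul hKpcont
  have hELL0 : 0 ≤ E * lam * L := mul_nonneg (mul_nonneg hE0.le hlam.le) hL0
  have hQb : ∀ x : ℝ, xh ≤ x → x ≤ P → 0 ≤ Q x ∧ Q x ≤ E * lam * L * N := by
    intro x h1 h2
    have hKp0 : 0 ≤ Kp x := intervalIntegral.integral_nonneg h1 (fun ξ _ => hp0 ξ)
    have hKpN : Kp x ≤ N := hpN xh x (hJsub hxhJ).1 h2 h1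
    exact ⟨mul_nonneg hELL0 hKp0, mul_le_mul_of_nonneg_left hKpN hELL0⟩
  set RQ := fun x : ℝ => ∫ ξ in xh..x, Q ξ with hRQdef
  have hRQd : ∀ x : ℝ, HasDerivAt RQ (Q x) x := by
    intro x
    exact intervalIntegral.integral_hasDerivAt_right (hQcont.intervalIntegrable _ _)
      (hQcont.aestronglyMeasurable.stronglyMeasurableAtFilter) hQcont.continuousAt
  have hRQcont : Continuous RQ :=
    intervalIntegral.continuous_primitive (fun x y => hQcont.intervalIntegrable x y) xh
  have hRQxh : RQ xh = 0 := intervalIntegral.integral_same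
  have hRQb : ∀ x : ℝ, xh ≤ x → x ≤ T → RQ x ≤ E * lam * L * N * (2 * P) := by
    intro x h1 h2
    calc RQ x ≤ ∫ ξ in xh..x, E * lam * L * N := by
          apply intervalIntegral.integral_mono_on h1 (hQcont.intervalIntegrable _ _)
            intervalIntegrable_const
          intro ξ hξ
          exact (hQb ξ hξ.1 (by linarith [hξ.2])).2
      _ = (x - xh) * (E * lam * L * N) := by
          rw [intervalIntegral.integral_const]; simp [smul_eq_mul]
      _ ≤ 2 * P * (E * lam * L * N) := by
          apply mul_le_mul_of_nonneg_right _ (mul_nonneg hELL0 hN0)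
          have h3 := (hJsub hxhJ).1
          linarith
      _ = E * lam * L * N * (2 * P) := by ring
  have hyC2R : ∀ x ∈ Icc xh T, y x ≤ (1 - R) * C2 := by
    set z := fun x => y x * Real.exp (-(RQ x)) with hzdef
    have hzderiv : ∀ x ∈ Ioo xh T, HasDerivAt z
        (-(u' x) * Real.exp (-(RQ x)) + y x * (Real.exp (-(RQ x)) * -(Q x))) x := by
      intro x hx
      have hxIoo : x ∈ Ioo A B := ⟨lt_of_lt_of_le hxhA hx.1.le, lt_of_le_of_lt hx.2.le hTB⟩
      exact (hyd x hxIoo).mul ((hRQd x).neg.exp)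
    have hzanti : AntitoneOn z (Icc xh T) := by
      refine antitoneOn_of_deriv_nonpos (convex_Icc _ _) ?_ ?_ ?_
      · exact (hycont.mono (Icc_subset_Icc hxhJ.1 hTJ.2)).mul
          ((Real.continuous_exp.comp hRQcont.neg).continuousOn)
      · intro x hx
        rw [interior_Icc] at hx
        exact ((hzderiv x hx).differentiableAt).differentiableWithinAt
      · intro x hx
        rw [interior_Icc] at hx
        rw [(hzderiv x hx).deriv]
        have hxm : x ∈ Icc xh T := Ioo_subset_Icc_self hx
        have hxJ : x ∈ Icc A B := ⟨le_trans hxhJ.1 hxm.1, le_trans hxm.2 hTJ.2⟩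
        have h2 := (hbR x hxm).2
        have hQy : ∫ ξ in xh..x, pospart a ξ * y ξ ≤ Kp x * y x := by
          calc ∫ ξ in xh..x, pospart a ξ * y ξ
              ≤ ∫ ξ in xh..x, pospart a ξ * y x := by
                apply intervalIntegral.integral_mono_on hx.1.le
                  ((hpII xh x).mul_continuousOn (hycont.mono (uIcc_subset_Icc hxhJ hxJ)))
                  ((hpII xh x).mul_const _)
                intro ξ hξ
                apply mul_le_mul_of_nonneg_left _ (hp0 ξ)
                exact hymonoR ⟨hξ.1, le_trans hξ.2 hxm.2⟩ hxm hξ.2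
            _ = Kp x * y x := by rw [intervalIntegral.integral_mul_const]
        have hyx0 : 0 ≤ y x := hy0 x hxJ
        have hkey2 : -(u' x) ≤ Q x * y x := by
          calc -(u' x) ≤ E * lam * L * ∫ ξ in xh..x, pospart a ξ * y ξ := h2
            _ ≤ E * lam * L * (Kp x * y x) := mul_le_mul_of_nonneg_left hQy hELL0
            _ = Q x * y x := by simp only [hQdef]; ring
        have hex := Real.exp_pos (-(RQ x))
        linarith only [mul_nonneg (sub_nonneg.mpr hkey2) hex.le]
    intro x hx
    have h1 : z x ≤ z xh := hzanti (left_mem_Icc.mpr hxhST.2) hx hx.1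
    have h2 : z xh = 1 - R := by
      simp only [hzdef]
      rw [hRQxh, hyxh]; simp
    have hexp := Real.exp_pos (RQ x)
    have h3 : y x = z x * Real.exp (RQ x) := by
      simp only [hzdef]
      rw [mul_assoc, ← Real.exp_add]; simp
    rw [h3]
    calc z x * Real.exp (RQ x) ≤ (1 - R) * Real.exp (RQ x) := by
          apply mul_le_mul_of_nonneg_right _ hexp.le
          rw [← h2]; exact h1
      _ ≤ (1 - R) * C2 := by
          apply mul_le_mul_of_nonneg_left _ h1R0
          rw [hC2def]
          exact Real.exp_le_exp.mpr (hRQb x hx.1 hx.2)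
  have hu'C3R : ∀ x ∈ Icc xh T, -(u' x) ≤ (1 - R) * C3 := by
    intro x hx
    have hxJ : x ∈ Icc A B := ⟨le_trans hxhJ.1 hx.1, le_trans hx.2 hTJ.2⟩
    have h2 := (hbR x hx).2
    have h3 : ∫ ξ in xh..x, pospart a ξ * y ξ ≤ N * ((1 - R) * C2) := by
      calc ∫ ξ in xh..x, pospart a ξ * y ξ
          ≤ ∫ ξ in xh..x, pospart a ξ * ((1 - R) * C2) := by
            apply intervalIntegral.integral_mono_on hx.1
              ((hpII xh x).mul_continuousOn (hycont.mono (uIcc_subset_Icc hxhJ hxJ)))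
              ((hpII xh x).mul_const _)
            intro ξ hξ
            exact mul_le_mul_of_nonneg_left (hyC2R ξ ⟨hξ.1, le_trans hξ.2 hx.2⟩) (hp0 ξ)
        _ = Kp x * ((1 - R) * C2) := by rw [intervalIntegral.integral_mul_const]
        _ ≤ N * ((1 - R) * C2) := by
            apply mul_le_mul_of_nonneg_right (hpN xh x (hJsub hxhJ).1 (by linarith [hx.2]) hx.1)
              (mul_nonneg h1R0 hC20.le)
    calc -(u' x) ≤ E * lam * L * ∫ ξ in xh..x, pospart a ξ * y ξ := h2
      _ ≤ E * lam * L * (N * ((1 - R) * C2)) := mul_le_mul_of_nonneg_left h3 hELL0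
      _ = (1 - R) * C3 := by rw [hC3def]; ring
  have hftcJ : ∀ x1 x2, x1 ∈ Icc A B → x2 ∈ Icc A B → x1 ≤ x2 →
      u x2 - u x1 = ∫ z in x1..x2, u' z := by
    intro x1 x2 h1 h2 h12
    have hint : IntervalIntegrable u' volume x1 x2 :=
      (hu'c.mono (uIcc_subset_Icc h1 h2)).intervalIntegrable
    have hder : ∀ z ∈ Ioo x1 x2, HasDerivWithinAt u (u' z) (Ioi z) z := by
      intro z hz
      have hzJ : z ∈ Icc A B := ⟨le_trans h1.1 hz.1.le, le_trans hz.2.le h2.2⟩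
      have hzIoo : z ∈ Ioo A B := ⟨lt_of_le_of_lt h1.1 hz.1, lt_of_lt_of_le hz.2 h2.2⟩
      exact ((hderiv z hzJ).hasDerivAt (Icc_mem_nhds hzIoo.1 hzIoo.2)).hasDerivWithinAt
    have h9 := intervalIntegral.integral_eq_sub_of_hasDeriv_right_of_le h12
      (hucont.mono (Icc_subset_Icc h1.1 h2.2)) hder hint
    linarith only [h9]
  have hyC4R : ∀ x ∈ Icc T B, y x ≤ (1 - R) * C4 := by
    intro x hx
    have hxJ : x ∈ Icc A B := ⟨le_trans hTJ.1 hx.1, hx.2⟩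
    have hu'low : ∀ z ∈ Icc T x, -(u' z) ≤ E * ((1 - R) * C3) := by
      intro z hz
      have hzJ : z ∈ Icc A B := ⟨le_trans hTJ.1 hz.1, le_trans hz.2 hx.2⟩
      have hsplit := intervalIntegral.integral_add_adjacent_intervals
        (hewII xh T hxhJ hTJ) (hewII T z hTJ hzJ)
      have hTz_neg : (∫ ξ in T..z, Real.exp (c * ξ) * w ξ) ≤ 0 := by
        have h9 : 0 ≤ ∫ ξ in T..z, -(Real.exp (c * ξ) * w ξ) := by
          apply intervalIntegral.integral_nonneg_of_ae_restrict hz.1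
          have hsub2 : Icc T z ⊆ Icc T B := Icc_subset_Icc le_rfl (le_trans hz.2 hx.2)
          filter_upwards [ae_restrict_of_ae_restrict_of_subset hsub2 hwnegTB] with ξ h1
          have h8 := mul_nonneg (Real.exp_pos (c * ξ)).le (neg_nonneg.mpr h1)
          simpa using h8
        rw [intervalIntegral.integral_neg] at h9
        linarith only [h9]
      have hformz := hform z hzJ
      have hformT := hform T hTJ
      have h1 : Real.exp (c * T) * u' T ≤ Real.exp (c * z) * u' z := by
        rw [hformz, hformT, ← hsplit]
        linarith only [hTz_neg]
      have hu'T : -((1 - R) * C3) ≤ u' T := by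
        have h9 := hu'C3R T ⟨hxhST.2, le_rfl⟩; linarith only [h9]
      have h4 : Real.exp (-(c * z)) * (-(Real.exp (c * z) * u' z))
          ≤ Real.exp (-(c * z)) * (Real.exp (c * T) * ((1 - R) * C3)) := by
        apply mul_le_mul_of_nonneg_left _ (Real.exp_pos _).le
        have h5 : Real.exp (c * T) * (-((1 - R) * C3)) ≤ Real.exp (c * T) * u' T :=
          mul_le_mul_of_nonneg_left hu'T (Real.exp_pos _).le
        have h6 : Real.exp (c * T) * (-((1 - R) * C3))
            = -(Real.exp (c * T) * ((1 - R) * C3)) := by ring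
        linarith only [h1, h5, h6]
      have hc1 : -(u' z) = Real.exp (-(c * z)) * (Real.exp (c * z) * (-(u' z))) :=
        (hidexp z _).symm
      calc -(u' z) = Real.exp (-(c * z)) * (-(Real.exp (c * z) * u' z)) := by
            rw [hc1]; ring
        _ ≤ Real.exp (-(c * z)) * (Real.exp (c * T) * ((1 - R) * C3)) := h4
        _ = (Real.exp (-(c * z)) * Real.exp (c * T)) * ((1 - R) * C3) := by ring
        _ ≤ E * ((1 - R) * C3) := mul_le_mul_of_nonneg_right
            (hexpE z T (habs2P (hJsub hzJ) (hJsub hTJ))) (mul_nonneg h1R0 hC30)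
    have hftc := hftcJ T x hTJ hxJ hx.1
    have h7 : ∫ z in T..x, -(u' z) ≤ (x - T) * (E * ((1 - R) * C3)) := by
      have h8 := intervalIntegral.integral_mono_on hx.1
        ((hu'c.mono (uIcc_subset_Icc hTJ hxJ)).intervalIntegrable.neg)
        (intervalIntegrable_const (μ := volume) (c := E * ((1 - R) * C3))) hu'low
      rw [intervalIntegral.integral_const] at h8
      simpa [smul_eq_mul] using h8
    have h9 : ∫ z in T..x, -(u' z) = -(u x - u T) := by
      rw [intervalIntegral.integral_neg, ← hftc]
    have hyT := hyC2R T ⟨hxhST.2, le_rfl⟩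
    have hlen : x - T ≤ 2 * P := by
      have h10 := (hJsub hxJ).2; have h11 := (hJsub hTJ).1; linarith only [h10, h11]
    have hE3 : 0 ≤ E * ((1 - R) * C3) := mul_nonneg hE0.le (mul_nonneg h1R0 hC30)
    have hfin : (x - T) * (E * ((1 - R) * C3)) ≤ 2 * P * (E * ((1 - R) * C3)) :=
      mul_le_mul_of_nonneg_right hlen hE3
    have hring : (1 - R) * C2 + 2 * P * (E * ((1 - R) * C3)) = (1 - R) * C4 := by
      rw [hC4def]; ring
    have hyx : y x - y T = -(u x - u T) := by simp only [hydef]; ring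
    linarith only [h7, h9, hyT, hfin, hring, hyx]
  -- Left side bounds on [S, xh]
  have hbL : ∀ x ∈ Icc S xh, 0 ≤ u' x ∧
      u' x ≤ E * lam * L * ∫ ξ in x..xh, pospart a ξ * y ξ := by
    intro x hx
    have hxJ : x ∈ Icc A B := ⟨le_trans hSJ.1 hx.1, le_trans hx.2 hxhJ.2⟩
    have hsub : Icc x xh ⊆ Icc S T := Icc_subset_Icc hx.1 hxhST.2
    have hwpos_x : ∀ᵐ ξ ∂(volume.restrict (Icc x xh)), 0 ≤ w ξ :=
      ae_restrict_of_ae_restrict_of_subset hsub hwposST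
    have hf2 := hform2 x hxJ
    have hswap : u' x = Real.exp (-(c * x)) * ∫ ξ in x..xh, Real.exp (c * ξ) * w ξ := by
      rw [hf2, intervalIntegral.integral_symm x xh]; ring
    have hInn : 0 ≤ ∫ ξ in x..xh, Real.exp (c * ξ) * w ξ := by
      apply intervalIntegral.integral_nonneg_of_ae_restrict hx.2
      filter_upwards [hwpos_x] with ξ h1
      exact mul_nonneg (Real.exp_pos _).le h1
    constructor
    · rw [hswap]
      exact mul_nonneg (Real.exp_pos _).le hInn
    · rw [hswap, ← intervalIntegral.integral_const_mul]
      calc ∫ ξ in x..xh, Real.exp (-(c * x)) * (Real.exp (c * ξ) * w ξ)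
          ≤ ∫ ξ in x..xh, E * lam * L * (pospart a ξ * y ξ) := by
            apply intervalIntegral.integral_mono_on hx.2
            · exact ((hewII x xh hxJ hxhJ).const_mul _)
            · exact (((hpII x xh).mul_continuousOn
                (hycont.mono (uIcc_subset_Icc hxJ hxhJ))).const_mul _)
            intro ξ hξ
            have hξJ : ξ ∈ Icc A B := ⟨le_trans hxJ.1 hξ.1, le_trans hξ.2 hxhJ.2⟩
            have hw1 : w ξ ≤ lam * L * (pospart a ξ * y ξ) := hwle ξ hξJ
            have hc1 : (0:ℝ) < Real.exp (-(c * x)) * Real.exp (c * ξ) :=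
              mul_pos (Real.exp_pos _) (Real.exp_pos _)
            have hrhs0 : 0 ≤ lam * L * (pospart a ξ * y ξ) :=
              mul_nonneg (mul_nonneg hlam.le hL0) (mul_nonneg (hp0 ξ) (hy0 ξ hξJ))
            calc Real.exp (-(c * x)) * (Real.exp (c * ξ) * w ξ)
                = (Real.exp (-(c * x)) * Real.exp (c * ξ)) * w ξ := by ring
              _ ≤ (Real.exp (-(c * x)) * Real.exp (c * ξ)) * (lam * L * (pospart a ξ * y ξ)) :=
                  mul_le_mul_of_nonneg_left hw1 hc1.le
              _ ≤ E * (lam * L * (pospart a ξ * y ξ)) :=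
                  mul_le_mul_of_nonneg_right
                    (hexpE x ξ (habs2P (hJsub hxJ) (hJsub hξJ))) hrhs0
              _ = E * lam * L * (pospart a ξ * y ξ) := by ring
        _ = E * lam * L * ∫ ξ in x..xh, pospart a ξ * y ξ := by
            rw [← intervalIntegral.integral_const_mul]
  have hyantiL : AntitoneOn y (Icc S xh) := by
    apply antitoneOn_of_deriv_nonpos (convex_Icc _ _)
      (hycont.mono (Icc_subset_Icc hSJ.1 hxhJ.2))
    · intro z hz
      rw [interior_Icc] at hz
      have hzIoo : z ∈ Ioo A B := ⟨lt_of_lt_of_le hAS hz.1.le, lt_of_le_of_lt hz.2.le hxhB⟩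
      exact ((hyd z hzIoo).differentiableAt).differentiableWithinAt
    · intro z hz
      rw [interior_Icc] at hz
      have hzIoo : z ∈ Ioo A B := ⟨lt_of_lt_of_le hAS hz.1.le, lt_of_le_of_lt hz.2.le hxhB⟩
      rw [(hyd z hzIoo).deriv]
      have h9 := (hbL z (Ioo_subset_Icc_self hz)).1
      linarith only [h9]
  set KpL := fun x : ℝ => ∫ η in x..xh, pospart a η with hKpLdef
  have hKpLcont : Continuous KpL := by
    have h1 : KpL = fun x => -(Kp x) := by
      funext x
      rw [hKpLdef, hKpdef]
      exact intervalIntegral.integral_symm xh x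
    rw [h1]; exact hKpcont.neg
  set QL := fun x : ℝ => E * lam * L * KpL x with hQLdef
  have hQLcont : Continuous QL := continuous_const.mul hKpLcont
  have hQLb : ∀ x : ℝ, -P ≤ x → x ≤ xh → 0 ≤ QL x ∧ QL x ≤ E * lam * L * N := by
    intro x h1 h2
    have hK0 : 0 ≤ KpL x := intervalIntegral.integral_nonneg h2 (fun ξ _ => hp0 ξ)
    have hKN : KpL x ≤ N := hpN x xh h1 (hJsub hxhJ).2 h2
    exact ⟨mul_nonneg hELL0 hK0, mul_le_mul_of_nonneg_left hKN hELL0⟩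
  set RQL := fun x : ℝ => ∫ ξ in x..xh, QL ξ with hRQLdef
  have hRQLd : ∀ x : ℝ, HasDerivAt RQL (-(QL x)) x := fun x =>
    intervalIntegral.integral_hasDerivAt_left (hQLcont.intervalIntegrable _ _)
      (hQLcont.aestronglyMeasurable.stronglyMeasurableAtFilter) hQLcont.continuousAt
  have hRQLcont : Continuous RQL := by
    have h1 : RQL = fun x => -(∫ ξ in xh..x, QL ξ) := by
      funext x
      rw [hRQLdef]
      exact intervalIntegral.integral_symm xh x
    rw [h1]
    exact (intervalIntegral.continuous_primitive
      (fun x y => hQLcont.intervalIntegrable x y) xh).neg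
  have hRQLxh : RQL xh = 0 := intervalIntegral.integral_same
  have hRQLb : ∀ x : ℝ, -P ≤ x → x ≤ xh → RQL x ≤ E * lam * L * N * (2 * P) := by
    intro x h1 h2
    calc RQL x ≤ ∫ ξ in x..xh, E * lam * L * N := by
          apply intervalIntegral.integral_mono_on h2 (hQLcont.intervalIntegrable _ _)
            intervalIntegrable_const
          intro ξ hξ
          exact (hQLb ξ (by linarith only [h1, hξ.1]) hξ.2).2
      _ = (xh - x) * (E * lam * L * N) := by
          rw [intervalIntegral.integral_const]; simp [smul_eq_mul]
      _ ≤ 2 * P * (E * lam * L * N) := by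
          apply mul_le_mul_of_nonneg_right _ (mul_nonneg hELL0 hN0)
          have h3 := (hJsub hxhJ).2
          linarith only [h1, h3]
      _ = E * lam * L * N * (2 * P) := by ring
  have hyC2L : ∀ x ∈ Icc S xh, y x ≤ (1 - R) * C2 := by
    set zL := fun x => y x * Real.exp (-(RQL x)) with hzLdef
    have hzLderiv : ∀ x ∈ Ioo S xh, HasDerivAt zL
        (-(u' x) * Real.exp (-(RQL x)) + y x * (Real.exp (-(RQL x)) * QL x)) x := by
      intro x hx
      have hxIoo : x ∈ Ioo A B := ⟨lt_of_lt_of_le hAS hx.1.le, lt_of_le_of_lt hx.2.le hxhB⟩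
      have h1 : HasDerivAt (fun x => -(RQL x)) (QL x) x := by
        exact (hRQLd x).neg.congr_deriv (neg_neg _)
      exact (hyd x hxIoo).mul (h1.exp)
    have hzmono : MonotoneOn zL (Icc S xh) := by
      refine monotoneOn_of_deriv_nonneg (convex_Icc _ _) ?_ ?_ ?_
      · exact (hycont.mono (Icc_subset_Icc hSJ.1 hxhJ.2)).mul
          ((Real.continuous_exp.comp hRQLcont.neg).continuousOn)
      · intro x hx
        rw [interior_Icc] at hx
        exact ((hzLderiv x hx).differentiableAt).differentiableWithinAt
      · intro x hx
        rw [interior_Icc] at hx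
        rw [(hzLderiv x hx).deriv]
        have hxm : x ∈ Icc S xh := Ioo_subset_Icc_self hx
        have hxJ : x ∈ Icc A B := ⟨le_trans hSJ.1 hxm.1, le_trans hxm.2 hxhJ.2⟩
        have h2 := (hbL x hxm).2
        have hQy : ∫ ξ in x..xh, pospart a ξ * y ξ ≤ KpL x * y x := by
          calc ∫ ξ in x..xh, pospart a ξ * y ξ
              ≤ ∫ ξ in x..xh, pospart a ξ * y x := by
                apply intervalIntegral.integral_mono_on hxm.2
                  ((hpII x xh).mul_continuousOn (hycont.mono (uIcc_subset_Icc hxJ hxhJ)))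
                  ((hpII x xh).mul_const _)
                intro ξ hξ
                apply mul_le_mul_of_nonneg_left _ (hp0 ξ)
                exact hyantiL hxm ⟨le_trans hxm.1 hξ.1, hξ.2⟩ hξ.1
            _ = KpL x * y x := by rw [intervalIntegral.integral_mul_const]
        have hyx0 : 0 ≤ y x := hy0 x hxJ
        have hkey2 : u' x ≤ QL x * y x := by
          calc u' x ≤ E * lam * L * ∫ ξ in x..xh, pospart a ξ * y ξ := h2
            _ ≤ E * lam * L * (KpL x * y x) := mul_le_mul_of_nonneg_left hQy hELL0
            _ = QL x * y x := by simp only [hQLdef]; ring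
        have hex := Real.exp_pos (-(RQL x))
        linarith only [mul_nonneg (sub_nonneg.mpr hkey2) hex.le]
    intro x hx
    have h1 : zL x ≤ zL xh := hzmono hx (right_mem_Icc.mpr hxhST.1) hx.2
    have h2 : zL xh = 1 - R := by
      simp only [hzLdef]
      rw [hRQLxh, hyxh]; simp
    have hexp := Real.exp_pos (RQL x)
    have h3 : y x = zL x * Real.exp (RQL x) := by
      simp only [hzLdef]
      rw [mul_assoc, ← Real.exp_add]; simp
    rw [h3]
    have hxJ : x ∈ Icc A B := ⟨le_trans hSJ.1 hx.1, le_trans hx.2 hxhJ.2⟩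
    calc zL x * Real.exp (RQL x) ≤ (1 - R) * Real.exp (RQL x) := by
          apply mul_le_mul_of_nonneg_right _ hexp.le
          rw [← h2]; exact h1
      _ ≤ (1 - R) * C2 := by
          apply mul_le_mul_of_nonneg_left _ h1R0
          rw [hC2def]
          exact Real.exp_le_exp.mpr (hRQLb x (hJsub hxJ).1 hx.2)
  have hu'C3L : ∀ x ∈ Icc S xh, u' x ≤ (1 - R) * C3 := by
    intro x hx
    have hxJ : x ∈ Icc A B := ⟨le_trans hSJ.1 hx.1, le_trans hx.2 hxhJ.2⟩
    have h2 := (hbL x hx).2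
    have h3 : ∫ ξ in x..xh, pospart a ξ * y ξ ≤ N * ((1 - R) * C2) := by
      calc ∫ ξ in x..xh, pospart a ξ * y ξ
          ≤ ∫ ξ in x..xh, pospart a ξ * ((1 - R) * C2) := by
            apply intervalIntegral.integral_mono_on hx.2
              ((hpII x xh).mul_continuousOn (hycont.mono (uIcc_subset_Icc hxJ hxhJ)))
              ((hpII x xh).mul_const _)
            intro ξ hξ
            exact mul_le_mul_of_nonneg_left (hyC2L ξ ⟨le_trans hx.1 hξ.1, hξ.2⟩) (hp0 ξ)
        _ = KpL x * ((1 - R) * C2) := by rw [intervalIntegral.integral_mul_const]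
        _ ≤ N * ((1 - R) * C2) := by
            apply mul_le_mul_of_nonneg_right (hpN x xh (hJsub hxJ).1 (hJsub hxhJ).2 hx.2)
              (mul_nonneg h1R0 hC20.le)
    calc u' x ≤ E * lam * L * ∫ ξ in x..xh, pospart a ξ * y ξ := h2
      _ ≤ E * lam * L * (N * ((1 - R) * C2)) := mul_le_mul_of_nonneg_left h3 hELL0
      _ = (1 - R) * C3 := by rw [hC3def]; ring
  have hyC4L : ∀ x ∈ Icc A S, y x ≤ (1 - R) * C4 := by
    intro x hx
    have hxJ : x ∈ Icc A B := ⟨hx.1, le_trans hx.2 hSJ.2⟩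
    have hu'hi : ∀ z ∈ Icc x S, u' z ≤ E * ((1 - R) * C3) := by
      intro z hz
      have hzJ : z ∈ Icc A B := ⟨le_trans hx.1 hz.1, le_trans hz.2 hSJ.2⟩
      have hzS : z ≤ S := hz.2
      have hformz := hform z hzJ
      have hformS := hform S hSJ
      -- exp(cz) u' z = ∫_z^{xh} = ∫_z^S + ∫_S^{xh}
      have hsplit := intervalIntegral.integral_add_adjacent_intervals
        (hewII z S hzJ hSJ) (hewII S xh hSJ hxhJ)
      have hzS_neg : (∫ ξ in z..S, Real.exp (c * ξ) * w ξ) ≤ 0 := by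
        have h9 : 0 ≤ ∫ ξ in z..S, -(Real.exp (c * ξ) * w ξ) := by
          apply intervalIntegral.integral_nonneg_of_ae_restrict hzS
          have hsub2 : Icc z S ⊆ Icc A S := Icc_subset_Icc hzJ.1 le_rfl
          filter_upwards [ae_restrict_of_ae_restrict_of_subset hsub2 hwnegAS] with ξ h1
          have h8 := mul_nonneg (Real.exp_pos (c * ξ)).le (neg_nonneg.mpr h1)
          simpa using h8
        rw [intervalIntegral.integral_neg] at h9
        linarith only [h9]
      have h1 : Real.exp (c * z) * u' z ≤ Real.exp (c * S) * u' S := by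
        have e1 : Real.exp (c * z) * u' z = ∫ ξ in z..xh, Real.exp (c * ξ) * w ξ := by
          rw [hformz, intervalIntegral.integral_symm xh z]
        have e2 : Real.exp (c * S) * u' S = ∫ ξ in S..xh, Real.exp (c * ξ) * w ξ := by
          rw [hformS, intervalIntegral.integral_symm xh S]
        rw [e1, e2, ← hsplit]
        linarith only [hzS_neg]
      have hu'S : u' S ≤ (1 - R) * C3 := hu'C3L S ⟨le_rfl, hxhST.1⟩
      have h4 : Real.exp (-(c * z)) * (Real.exp (c * z) * u' z)
          ≤ Real.exp (-(c * z)) * (Real.exp (c * S) * ((1 - R) * C3)) := by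
        apply mul_le_mul_of_nonneg_left _ (Real.exp_pos _).le
        have h5 : Real.exp (c * S) * u' S ≤ Real.exp (c * S) * ((1 - R) * C3) :=
          mul_le_mul_of_nonneg_left hu'S (Real.exp_pos _).le
        linarith only [h1, h5]
      calc u' z = Real.exp (-(c * z)) * (Real.exp (c * z) * u' z) := (hidexp z _).symm
        _ ≤ Real.exp (-(c * z)) * (Real.exp (c * S) * ((1 - R) * C3)) := h4
        _ = (Real.exp (-(c * z)) * Real.exp (c * S)) * ((1 - R) * C3) := by ring
        _ ≤ E * ((1 - R) * C3) := mul_le_mul_of_nonneg_right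
            (hexpE z S (habs2P (hJsub hzJ) (hJsub hSJ))) (mul_nonneg h1R0 hC30)
    have hftc := hftcJ x S hxJ hSJ hx.2
    have h7 : ∫ z in x..S, u' z ≤ (S - x) * (E * ((1 - R) * C3)) := by
      have h8 := intervalIntegral.integral_mono_on hx.2
        ((hu'c.mono (uIcc_subset_Icc hxJ hSJ)).intervalIntegrable)
        (intervalIntegrable_const (μ := volume) (c := E * ((1 - R) * C3))) hu'hi
      rw [intervalIntegral.integral_const] at h8
      simpa [smul_eq_mul] using h8
    have hyS := hyC2L S ⟨le_rfl, hxhST.1⟩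
    have hlen : S - x ≤ 2 * P := by
      have h10 := (hJsub hSJ).2; have h11 := (hJsub hxJ).1; linarith only [h10, h11]
    have hE3 : 0 ≤ E * ((1 - R) * C3) := mul_nonneg hE0.le (mul_nonneg h1R0 hC30)
    have hfin : (S - x) * (E * ((1 - R) * C3)) ≤ 2 * P * (E * ((1 - R) * C3)) :=
      mul_le_mul_of_nonneg_right hlen hE3
    have hring : (1 - R) * C2 + 2 * P * (E * ((1 - R) * C3)) = (1 - R) * C4 := by
      rw [hC4def]; ring
    have hyx : y x - y S = u S - u x := by simp only [hydef]; ring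
    linarith only [h7, hftc, hyS, hfin, hring, hyx]
  have hC24 : C2 ≤ C4 := by
    have h9 : 0 ≤ 2 * P * E * C3 :=
      mul_nonneg (mul_nonneg (by linarith only [hP]) hE0.le) hC30
    rw [hC4def]; linarith only [h9]
  have hyJall : ∀ x ∈ Icc A B, y x ≤ (1 - R) * C4 := by
    intro x hx
    rcases le_total x S with h1 | h1
    · exact hyC4L x ⟨hx.1, h1⟩
    rcases le_total x xh with h2 | h2
    · have h9 := hyC2L x ⟨h1, h2⟩
      have h10 := mul_le_mul_of_nonneg_left hC24 h1R0
      linarith only [h9, h10]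
    rcases le_total x T with h3 | h3
    · have h9 := hyC2R x ⟨h2, h3⟩
      have h10 := mul_le_mul_of_nonneg_left hC24 h1R0
      linarith only [h9, h10]
    · exact hyC4R x ⟨h3, hx.2⟩
  have hud : ∀ x ∈ Icc A B, d ≤ u x := by
    intro x hx
    have h1 := hyJall x hx
    have h2 : (1 - R) * C4 ≤ ((1 - d) / (C4 + 1)) * C4 :=
      mul_le_mul_of_nonneg_right h1R hC40.le
    have h3 : ((1 - d) / (C4 + 1)) * C4 ≤ 1 - d := by
      rw [div_mul_eq_mul_div, div_le_iff₀ (by linarith only [hC40])]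
      linarith only [hd1]
    have h4 : y x ≤ 1 - d := le_trans (le_trans h1 h2) h3
    simp only [hydef] at h4; linarith only [h4]
  -- Final estimates
  set Γ := sSup (g '' Icc (0:ℝ) R) with hΓdef
  set χ := sInf (g '' Icc d R) with hχdef
  have hIccR : Icc (0:ℝ) R ⊆ Icc 0 1 := Icc_subset_Icc le_rfl hR1.le
  have hIccdR : Icc d R ⊆ Icc (0:ℝ) 1 := Icc_subset_Icc hd0.le hR1.le
  have hΓle : ∀ v ∈ Icc (0:ℝ) R, g v ≤ Γ := by
    intro v hv
    exact le_csSup (isCompact_Icc.image_of_continuousOn (hg.mono hIccR)).bddAbove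
      (mem_image_of_mem g hv)
  have hΓ0 : 0 ≤ Γ := by
    have h9 := hΓle 0 ⟨le_rfl, hR0.le⟩
    rwa [hgs.1] at h9
  have hχle : ∀ v ∈ Icc d R, χ ≤ g v := by
    intro v hv
    exact csInf_le (isCompact_Icc.image_of_continuousOn (hg.mono hIccdR)).bddBelow
      (mem_image_of_mem g hv)
  have hχ0 : 0 ≤ χ := by
    apply le_csInf ((nonempty_Icc.mpr hRd.le).image g)
    rintro v ⟨z, hz, rfl⟩
    exact hg0 z (hIccdR hz)
  set wp := fun ξ => θ * (lam * pospart a ξ) * g (u ξ) with hwpdef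
  set wn := fun ξ => θ * (mu * negpart a ξ) * g (u ξ) with hwndef
  have hwsplit : ∀ ξ, w ξ = wp ξ - wn ξ := by
    intro ξ; simp only [hwdef, hwpdef, hwndef, awt]; ring
  have hwpII : ∀ x z : ℝ, x ∈ Icc A B → z ∈ Icc A B → IntervalIntegrable wp volume x z := by
    intro x z hx hz
    have hrw : wp = fun ξ => (θ * g (u ξ)) * (lam * pospart a ξ) := by
      funext ξ; simp only [hwpdef]; ring
    rw [hrw]
    exact ((hpII x z).const_mul lam).continuousOn_mul
      ((continuousOn_const.mul hgu).mono (uIcc_subset_Icc hx hz))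
  have hwnII : ∀ x z : ℝ, x ∈ Icc A B → z ∈ Icc A B → IntervalIntegrable wn volume x z := by
    intro x z hx hz
    have hrw : wn = fun ξ => (θ * g (u ξ)) * (mu * negpart a ξ) := by
      funext ξ; simp only [hwndef]; ring
    rw [hrw]
    exact ((hnII x z).const_mul mu).continuousOn_mul
      ((continuousOn_const.mul hgu).mono (uIcc_subset_Icc hx hz))
  have hewpII : ∀ x z : ℝ, x ∈ Icc A B → z ∈ Icc A B →
      IntervalIntegrable (fun ξ => Real.exp (c * ξ) * wp ξ) volume x z :=
    fun x z hx hz => (hwpII x z hx hz).continuousOn_mul ((expcont c).continuousOn)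
  have hewnII : ∀ x z : ℝ, x ∈ Icc A B → z ∈ Icc A B →
      IntervalIntegrable (fun ξ => Real.exp (c * ξ) * wn ξ) volume x z :=
    fun x z hx hz => (hwnII x z hx hz).continuousOn_mul ((expcont c).continuousOn)
  have hwp0 : ∀ ξ ∈ Icc A B, 0 ≤ wp ξ := by
    intro ξ hξ
    exact mul_nonneg (mul_nonneg hθ.1.le (mul_nonneg hlam.le (hp0 ξ))) (hgu0 ξ hξ)
  have hwn0 : ∀ ξ ∈ Icc A B, 0 ≤ wn ξ := by
    intro ξ hξ
    exact mul_nonneg (mul_nonneg hθ.1.le (mul_nonneg hmu.le (hn0 ξ))) (hgu0 ξ hξ)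
  have hwpΓ : ∀ ξ ∈ Icc A B, wp ξ ≤ θ * lam * Γ * pospart a ξ := by
    intro ξ hξ
    have h1 : g (u ξ) ≤ Γ := hΓle (u ξ) ⟨(hur ξ hξ).1, hleR ξ hξ⟩
    have h2 : θ * (lam * pospart a ξ) * g (u ξ) ≤ θ * (lam * pospart a ξ) * Γ :=
      mul_le_mul_of_nonneg_left h1 (mul_nonneg hθ.1.le (mul_nonneg hlam.le (hp0 ξ)))
    calc wp ξ ≤ θ * (lam * pospart a ξ) * Γ := h2
      _ = θ * lam * Γ * pospart a ξ := by ring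
  have hwnχ : ∀ ξ ∈ Icc A B, θ * mu * χ * negpart a ξ ≤ wn ξ := by
    intro ξ hξ
    have h1 : χ ≤ g (u ξ) := hχle (u ξ) ⟨hud ξ hξ, hleR ξ hξ⟩
    have h2 : θ * (mu * negpart a ξ) * χ ≤ θ * (mu * negpart a ξ) * g (u ξ) :=
      mul_le_mul_of_nonneg_left h1 (mul_nonneg hθ.1.le (mul_nonneg hmu.le (hn0 ξ)))
    calc θ * mu * χ * negpart a ξ = θ * (mu * negpart a ξ) * χ := by ring
      _ ≤ wn ξ := h2
  -- integral of pospart over the whole interval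
  set Y := ∫ x in Icc S T, |a x| with hYdef
  have hY0 : 0 ≤ Y := integral_nonneg (fun x => abs_nonneg _)
  have hpz : ∀ (X Z : ℝ), (∀ᵐ ξ ∂(volume.restrict (Icc X Z)), a ξ ≤ 0) → X ≤ Z →
      (∫ ξ in X..Z, pospart a ξ) = 0 := by
    intro X Z hae hXZ
    rw [intervalIntegral_congr_ae_restrict hXZ (g := fun _ => (0:ℝ)) ?_,
      intervalIntegral.integral_zero]
    filter_upwards [hae] with ξ h1
    exact max_eq_right (by linarith only [h1])
  have hpST : (∫ ξ in S..T, pospart a ξ) = Y := by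
    rw [hYdef, integral_Icc_eq_integral_Ioc, ← intervalIntegral.integral_of_le hST.le]
    apply intervalIntegral_congr_ae_restrict hST.le
    filter_upwards [hposI] with ξ h1
    rw [show pospart a ξ = max (a ξ) 0 from rfl, max_eq_left h1, abs_of_nonneg h1]
  have hpAB : (∫ ξ in A..B, pospart a ξ) = Y := by
    rw [← intervalIntegral.integral_add_adjacent_intervals (hpII A S) (hpII S B),
      ← intervalIntegral.integral_add_adjacent_intervals (hpII S T) (hpII T B),
      hpz A S hnegL hAS.le, hpz T B hnegR hTB.le, hpST]
    ring
  have hpY2 : ∀ x1 x2 : ℝ, A ≤ x1 → x1 ≤ x2 → x2 ≤ B →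
      (∫ ξ in x1..x2, pospart a ξ) ≤ Y := by
    intro x1 x2 h1 h2 h3
    rw [← hpAB, intervalIntegral.integral_of_le h2, intervalIntegral.integral_of_le hAB]
    apply setIntegral_mono_set ((hpint A B).mono_set Ioc_subset_Icc_self)
      (Filter.Eventually.of_forall hp0) ((Ioc_subset_Ioc h1 h3).eventuallyLE)
  -- splitting of u'
  have hsplitint : ∀ x ∈ Icc A B, (∫ ξ in xh..x, Real.exp (c * ξ) * w ξ)
      = (∫ ξ in xh..x, Real.exp (c * ξ) * wp ξ) - ∫ ξ in xh..x, Real.exp (c * ξ) * wn ξ := by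
    intro x hx
    rw [← intervalIntegral.integral_sub (hewpII xh x hxhJ hx) (hewnII xh x hxhJ hx)]
    apply intervalIntegral.integral_congr
    intro ξ _
    dsimp only
    rw [hwsplit ξ]
    ring
  -- continuity of primitives
  have hewnInt : IntegrableOn (fun ξ => Real.exp (c * ξ) * wn ξ) (Icc A B) := by
    rw [← intervalIntegrable_iff_integrableOn_Icc_of_le hAB]
    exact hewnII A B (left_mem_Icc.mpr hAB) (right_mem_Icc.mpr hAB)
  have hewpInt : IntegrableOn (fun ξ => Real.exp (c * ξ) * wp ξ) (Icc A B) := by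
    rw [← intervalIntegrable_iff_integrableOn_Icc_of_le hAB]
    exact hewpII A B (left_mem_Icc.mpr hAB) (right_mem_Icc.mpr hAB)
  have hexpnegcont : Continuous (fun x : ℝ => Real.exp (-(c * x))) :=
    Real.continuous_exp.comp (continuous_const.mul continuous_id).neg
  have hprimn : ContinuousOn (fun x => ∫ ξ in xh..x, Real.exp (c * ξ) * wn ξ) (Icc A B) := by
    have h9 := intervalIntegral.continuousOn_primitive_interval' (μ := volume)
      (hewnII A B (left_mem_Icc.mpr hAB) (right_mem_Icc.mpr hAB))
      (by rw [uIcc_of_le hAB]; exact hxhJ)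
    rwa [uIcc_of_le hAB] at h9
  have hprimp : ContinuousOn (fun x => ∫ ξ in xh..x, Real.exp (c * ξ) * wp ξ) (Icc A B) := by
    have h9 := intervalIntegral.continuousOn_primitive_interval' (μ := volume)
      (hewpII A B (left_mem_Icc.mpr hAB) (right_mem_Icc.mpr hAB))
      (by rw [uIcc_of_le hAB]; exact hxhJ)
    rwa [uIcc_of_le hAB] at h9
  set F1 := fun x => Real.exp (-(c * x)) * ∫ ξ in xh..x, Real.exp (c * ξ) * wn ξ with hF1def
  set F2 := fun x => Real.exp (-(c * x)) * ∫ ξ in xh..x, Real.exp (c * ξ) * wp ξ with hF2def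
  have hF1cont : ContinuousOn F1 (Icc A B) := hexpnegcont.continuousOn.mul hprimn
  have hF2cont : ContinuousOn F2 (Icc A B) := hexpnegcont.continuousOn.mul hprimp
  have hu'split : ∀ x ∈ Icc A B, u' x = F1 x - F2 x := by
    intro x hx
    rw [hform2 x hx, hsplitint x hx]
    simp only [hF1def, hF2def]
    ring
  -- lower/upper exponential bounds with window
  have hexpLo : ∀ x ξ W : ℝ, |ξ - x| ≤ W →
      Real.exp (-(|c| * W)) ≤ Real.exp (-(c * x)) * Real.exp (c * ξ) := by
    intro x ξ W hle
    rw [← Real.exp_add]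
    apply Real.exp_le_exp.mpr
    have h1 : -(c * (ξ - x)) ≤ |c * (ξ - x)| := neg_le_abs _
    have h2 : |c * (ξ - x)| ≤ |c| * W := by
      rw [abs_mul]
      exact mul_le_mul_of_nonneg_left hle (abs_nonneg c)
    have h3 : -(c * x) + c * ξ = c * (ξ - x) := by ring
    linarith only [h1, h2]
  have hexpHi : ∀ x ξ W : ℝ, |ξ - x| ≤ W →
      Real.exp (-(c * x)) * Real.exp (c * ξ) ≤ Real.exp (|c| * W) := by
    intro x ξ W hle
    rw [← Real.exp_add]
    apply Real.exp_le_exp.mpr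
    have h1 : c * (ξ - x) ≤ |c * (ξ - x)| := le_abs_self _
    have h2 : |c * (ξ - x)| ≤ |c| * W := by
      rw [abs_mul]
      exact mul_le_mul_of_nonneg_left hle (abs_nonneg c)
    linarith only [h1, h2]
  refine ⟨?_, ?_⟩
  · -- right estimate at B
    set XR := ∫ x in Icc T B, |∫ t in T..x, negpart a t| with hXRdef
    set XX := ∫ x in Icc T B, ∫ t in T..x, negpart a t with hXXdef
    have hXeq : XR = XX := by
      rw [hXRdef, hXXdef]
      apply setIntegral_congr_fun measurableSet_Icc
      intro x hx
      exact abs_of_nonneg (intervalIntegral.integral_nonneg hx.1 (fun ξ _ => hn0 ξ))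
    have hBJ : B ∈ Icc A B := right_mem_Icc.mpr hAB
    have hftcB := hftcJ xh B hxhJ hBJ hxhB.le
    have hsub : ∫ x in xh..B, u' x = (∫ x in xh..B, F1 x) - ∫ x in xh..B, F2 x := by
      rw [← intervalIntegral.integral_sub
        ((hF1cont.mono (uIcc_subset_Icc hxhJ hBJ)).intervalIntegrable)
        ((hF2cont.mono (uIcc_subset_Icc hxhJ hBJ)).intervalIntegrable)]
      apply intervalIntegral.integral_congr
      intro x hx
      rw [uIcc_of_le hxhB.le] at hx
      exact hu'split x ⟨le_trans hxhJ.1 hx.1, le_trans hx.2 hBJ.2⟩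
    set E1 := Real.exp (-(|c| * (B - T))) with hE1def
    set E2 := Real.exp (|c| * (B - S)) with hE2def
    have hF1lo : ∀ x ∈ Icc T B, θ * mu * χ * E1 * (∫ t in T..x, negpart a t) ≤ F1 x := by
      intro x hx
      have hxJ : x ∈ Icc A B := ⟨le_trans hTJ.1 hx.1, hx.2⟩
      have hsplit2 := intervalIntegral.integral_add_adjacent_intervals
        (hewnII xh T hxhJ hTJ) (hewnII T x hTJ hxJ)
      have h1 : 0 ≤ ∫ ξ in xh..T, Real.exp (c * ξ) * wn ξ := by
        apply intervalIntegral.integral_nonneg hxhST.2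
        intro ξ hξ
        exact mul_nonneg (Real.exp_pos _).le
          (hwn0 ξ ⟨le_trans hxhJ.1 hξ.1, le_trans hξ.2 hTJ.2⟩)
      have h2 : ∫ ξ in T..x, Real.exp (-(c * x)) * (Real.exp (c * ξ) * wn ξ)
          ≥ ∫ ξ in T..x, θ * mu * χ * E1 * negpart a ξ := by
        apply intervalIntegral.integral_mono_on hx.1
          (((hnII T x).const_mul _))
          (((hewnII T x hTJ hxJ).const_mul _))
        intro ξ hξ
        have hξJ : ξ ∈ Icc A B := ⟨le_trans hTJ.1 hξ.1, le_trans hξ.2 hxJ.2⟩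
        have he1 : E1 ≤ Real.exp (-(c * x)) * Real.exp (c * ξ) := by
          rw [hE1def]
          apply hexpLo x ξ (B - T)
          rw [abs_le]
          constructor
          · have := hx.2; have := hξ.1; linarith
          · have := hξ.2; have := hx.1; have := hx.2; linarith
        have hm0 : 0 ≤ θ * mu * χ * negpart a ξ :=
          mul_nonneg (mul_nonneg (mul_nonneg hθ.1.le hmu.le) hχ0) (hn0 ξ)
        have hwge := hwnχ ξ hξJ
        have hE1pos : (0:ℝ) < E1 := Real.exp_pos _
        calc θ * mu * χ * E1 * negpart a ξ = E1 * (θ * mu * χ * negpart a ξ) := by ring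
          _ ≤ (Real.exp (-(c * x)) * Real.exp (c * ξ)) * (θ * mu * χ * negpart a ξ) :=
              mul_le_mul_of_nonneg_right he1 hm0
          _ ≤ (Real.exp (-(c * x)) * Real.exp (c * ξ)) * wn ξ :=
              mul_le_mul_of_nonneg_left hwge
                (mul_pos (Real.exp_pos _) (Real.exp_pos _)).le
          _ = Real.exp (-(c * x)) * (Real.exp (c * ξ) * wn ξ) := by ring
      have h3 : (∫ ξ in T..x, θ * mu * χ * E1 * negpart a ξ)
          = θ * mu * χ * E1 * ∫ ξ in T..x, negpart a ξ := by
        rw [intervalIntegral.integral_const_mul]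
      have h4 : F1 x = Real.exp (-(c * x)) * ((∫ ξ in xh..T, Real.exp (c * ξ) * wn ξ)
          + ∫ ξ in T..x, Real.exp (c * ξ) * wn ξ) := by
        simp only [hF1def]
        rw [hsplit2]
      have h5 : Real.exp (-(c * x)) * ∫ ξ in T..x, Real.exp (c * ξ) * wn ξ
          = ∫ ξ in T..x, Real.exp (-(c * x)) * (Real.exp (c * ξ) * wn ξ) := by
        rw [intervalIntegral.integral_const_mul]
      have h6 := mul_nonneg (Real.exp_pos (-(c * x))).le h1
      rw [h4]
      rw [mul_add]
      have h7 := h2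
      rw [h3] at h7
      rw [← h5] at h7
      linarith only [h6, h7]
    have hF2hi : ∀ x ∈ Icc xh B, F2 x ≤ θ * lam * Γ * E2 * Y := by
      intro x hx
      have hxJ : x ∈ Icc A B := ⟨le_trans hxhJ.1 hx.1, hx.2⟩
      have h2 : ∫ ξ in xh..x, Real.exp (-(c * x)) * (Real.exp (c * ξ) * wp ξ)
          ≤ ∫ ξ in xh..x, E2 * (θ * lam * Γ) * pospart a ξ := by
        apply intervalIntegral.integral_mono_on hx.1
          (((hewpII xh x hxhJ hxJ).const_mul _))
          (((hpII xh x).const_mul _))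
        intro ξ hξ
        have hξJ : ξ ∈ Icc A B := ⟨le_trans hxhJ.1 hξ.1, le_trans hξ.2 hxJ.2⟩
        have he2 : Real.exp (-(c * x)) * Real.exp (c * ξ) ≤ E2 := by
          rw [hE2def]
          apply hexpHi x ξ (B - S)
          rw [abs_le]
          constructor
          · have h9 := hx.2; have h8 := hξ.1; have h7 := hxhST.1; linarith
          · have h9 := hξ.2; have h8 := hx.1; have h7 := hxhST.1
            have h6 := hxJ.2; linarith
        have hwle2 := hwpΓ ξ hξJ
        have hm0 : 0 ≤ θ * lam * Γ * pospart a ξ :=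
          mul_nonneg (mul_nonneg (mul_nonneg hθ.1.le hlam.le) hΓ0) (hp0 ξ)
        calc Real.exp (-(c * x)) * (Real.exp (c * ξ) * wp ξ)
            = (Real.exp (-(c * x)) * Real.exp (c * ξ)) * wp ξ := by ring
          _ ≤ (Real.exp (-(c * x)) * Real.exp (c * ξ)) * (θ * lam * Γ * pospart a ξ) :=
              mul_le_mul_of_nonneg_left hwle2
                (mul_pos (Real.exp_pos _) (Real.exp_pos _)).le
          _ ≤ E2 * (θ * lam * Γ * pospart a ξ) := mul_le_mul_of_nonneg_right he2 hm0
          _ = E2 * (θ * lam * Γ) * pospart a ξ := by ring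
      have h3 : (∫ ξ in xh..x, E2 * (θ * lam * Γ) * pospart a ξ)
          = E2 * (θ * lam * Γ) * ∫ ξ in xh..x, pospart a ξ := by
        rw [intervalIntegral.integral_const_mul]
      have h4 : E2 * (θ * lam * Γ) * (∫ ξ in xh..x, pospart a ξ)
          ≤ E2 * (θ * lam * Γ) * Y := by
        apply mul_le_mul_of_nonneg_left (hpY2 xh x hxhJ.1 hx.1 hxJ.2)
        exact mul_nonneg (Real.exp_pos _).le
          (mul_nonneg (mul_nonneg hθ.1.le hlam.le) hΓ0)
      have h5 : F2 x = ∫ ξ in xh..x, Real.exp (-(c * x)) * (Real.exp (c * ξ) * wp ξ) := by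
        simp only [hF2def]
        rw [intervalIntegral.integral_const_mul]
      rw [h5]
      calc (∫ ξ in xh..x, Real.exp (-(c * x)) * (Real.exp (c * ξ) * wp ξ))
          ≤ E2 * (θ * lam * Γ) * ∫ ξ in xh..x, pospart a ξ := by rw [← h3]; exact h2
        _ ≤ E2 * (θ * lam * Γ) * Y := h4
        _ = θ * lam * Γ * E2 * Y := by ring
    -- integrate the bounds
    have hT2 : (∫ x in xh..B, F2 x) ≤ (B - S) * (θ * lam * Γ * E2 * Y) := by
      have h8 := intervalIntegral.integral_mono_on hxhB.le
        ((hF2cont.mono (uIcc_subset_Icc hxhJ hBJ)).intervalIntegrable)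
        (intervalIntegrable_const (μ := volume) (c := θ * lam * Γ * E2 * Y)) hF2hi
      rw [intervalIntegral.integral_const] at h8
      have h9 : (B - xh) * (θ * lam * Γ * E2 * Y) ≤ (B - S) * (θ * lam * Γ * E2 * Y) := by
        apply mul_le_mul_of_nonneg_right _ (mul_nonneg (mul_nonneg (mul_nonneg
          (mul_nonneg hθ.1.le hlam.le) hΓ0) (Real.exp_pos _).le) hY0)
        linarith only [hxhST.1]
      rw [smul_eq_mul] at h8
      linarith only [h8, h9]
    have hT1 : θ * mu * χ * E1 * XX ≤ ∫ x in xh..B, F1 x := by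
      have hicc : ContinuousOn (fun x => ∫ t in T..x, negpart a t) (Icc A B) := by
        have h9 := intervalIntegral.continuousOn_primitive_interval' (μ := volume)
          (hnII A B) (by rw [uIcc_of_le hAB]; exact hTJ)
        rwa [uIcc_of_le hAB] at h9
      have hsplitF : (∫ x in xh..B, F1 x) = (∫ x in xh..T, F1 x) + ∫ x in T..B, F1 x :=
        (intervalIntegral.integral_add_adjacent_intervals
          ((hF1cont.mono (uIcc_subset_Icc hxhJ hTJ)).intervalIntegrable)
          ((hF1cont.mono (uIcc_subset_Icc hTJ hBJ)).intervalIntegrable)).symm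
      have hF1pos : 0 ≤ ∫ x in xh..T, F1 x := by
        apply intervalIntegral.integral_nonneg hxhST.2
        intro x hx
        have hxJ : x ∈ Icc A B := ⟨le_trans hxhJ.1 hx.1, le_trans hx.2 hTJ.2⟩
        simp only [hF1def]
        apply mul_nonneg (Real.exp_pos _).le
        apply intervalIntegral.integral_nonneg hx.1
        intro ξ hξ
        exact mul_nonneg (Real.exp_pos _).le
          (hwn0 ξ ⟨le_trans hxhJ.1 hξ.1, le_trans hξ.2 hxJ.2⟩)
      have hmid : (∫ x in T..B, θ * mu * χ * E1 * (∫ t in T..x, negpart a t))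
          ≤ ∫ x in T..B, F1 x := by
        apply intervalIntegral.integral_mono_on hTB.le
          (((hicc.mono (uIcc_subset_Icc hTJ hBJ)).intervalIntegrable).const_mul _)
          ((hF1cont.mono (uIcc_subset_Icc hTJ hBJ)).intervalIntegrable)
        exact hF1lo
      have heq2 : (∫ x in T..B, θ * mu * χ * E1 * (∫ t in T..x, negpart a t))
          = θ * mu * χ * E1 * XX := by
        rw [intervalIntegral.integral_const_mul, hXXdef,
          intervalIntegral.integral_of_le hTB.le, integral_Icc_eq_integral_Ioc]
      linarith only [hsplitF, hF1pos, hmid, heq2]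
    have hQ : u B - R = (∫ x in xh..B, F1 x) - ∫ x in xh..B, F2 x := by
      rw [← hsub, ← hftcB, huxh]
    have hfin1 : θ * mu * χ * E1 * XX - (B - S) * (θ * lam * Γ * E2 * Y) ≤ u B - R := by
      rw [hQ]
      have h9 := hT1
      have h10 := hT2
      linarith only [h9, h10]
    have hgoal : R + θ * (mu * XR * χ * E1 - lam * Y * Γ * E2 * (B - S))
        = R + (θ * mu * χ * E1 * XX - (B - S) * (θ * lam * Γ * E2 * Y)) := by
      rw [hXeq]; ring
    rw [ge_iff_le, hgoal]
    linarith only [hfin1]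
  · -- left estimate at A
    set XL := ∫ x in Icc A S, |∫ t in x..S, negpart a t| with hXLdef
    set XX := ∫ x in Icc A S, ∫ t in x..S, negpart a t with hXXdef
    have hXeq : XL = XX := by
      rw [hXLdef, hXXdef]
      apply setIntegral_congr_fun measurableSet_Icc
      intro x hx
      exact abs_of_nonneg (intervalIntegral.integral_nonneg hx.2 (fun ξ _ => hn0 ξ))
    have hAJ : A ∈ Icc A B := left_mem_Icc.mpr hAB
    have hftcA := hftcJ A xh hAJ hxhJ hxhA.le
    have hu'split2 : ∀ x ∈ Icc A B, -(u' x)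
        = (Real.exp (-(c * x)) * ∫ ξ in x..xh, Real.exp (c * ξ) * wn ξ)
          - Real.exp (-(c * x)) * ∫ ξ in x..xh, Real.exp (c * ξ) * wp ξ := by
      intro x hx
      have h1 := hu'split x hx
      simp only [hF1def, hF2def] at h1
      rw [h1, intervalIntegral.integral_symm x xh
        (f := fun ξ => Real.exp (c * ξ) * wn ξ), intervalIntegral.integral_symm x xh
        (f := fun ξ => Real.exp (c * ξ) * wp ξ)]
      ring
    set G1 := fun x => Real.exp (-(c * x)) * ∫ ξ in x..xh, Real.exp (c * ξ) * wn ξ with hG1def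
    set G2 := fun x => Real.exp (-(c * x)) * ∫ ξ in x..xh, Real.exp (c * ξ) * wp ξ with hG2def
    have hprimnL : ContinuousOn (fun x => ∫ ξ in x..xh, Real.exp (c * ξ) * wn ξ) (Icc A B) := by
      have h9 : (fun x => ∫ ξ in x..xh, Real.exp (c * ξ) * wn ξ)
          = fun x => -(∫ ξ in xh..x, Real.exp (c * ξ) * wn ξ) := by
        funext x; exact intervalIntegral.integral_symm xh x
      rw [h9]; exact hprimn.neg
    have hprimpL : ContinuousOn (fun x => ∫ ξ in x..xh, Real.exp (c * ξ) * wp ξ) (Icc A B) := by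
      have h9 : (fun x => ∫ ξ in x..xh, Real.exp (c * ξ) * wp ξ)
          = fun x => -(∫ ξ in xh..x, Real.exp (c * ξ) * wp ξ) := by
        funext x; exact intervalIntegral.integral_symm xh x
      rw [h9]; exact hprimp.neg
    have hG1cont : ContinuousOn G1 (Icc A B) := hexpnegcont.continuousOn.mul hprimnL
    have hG2cont : ContinuousOn G2 (Icc A B) := hexpnegcont.continuousOn.mul hprimpL
    have hsub : ∫ x in A..xh, -(u' x) = (∫ x in A..xh, G1 x) - ∫ x in A..xh, G2 x := by
      rw [← intervalIntegral.integral_sub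
        ((hG1cont.mono (uIcc_subset_Icc hAJ hxhJ)).intervalIntegrable)
        ((hG2cont.mono (uIcc_subset_Icc hAJ hxhJ)).intervalIntegrable)]
      apply intervalIntegral.integral_congr
      intro x hx
      rw [uIcc_of_le hxhA.le] at hx
      exact hu'split2 x ⟨hx.1, le_trans hx.2 hxhJ.2⟩
    set E1' := Real.exp (-(|c| * (S - A))) with hE1'def
    set E2' := Real.exp (|c| * (T - A)) with hE2'def
    have hG1lo : ∀ x ∈ Icc A S, θ * mu * χ * E1' * (∫ t in x..S, negpart a t) ≤ G1 x := by
      intro x hx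
      have hxJ : x ∈ Icc A B := ⟨hx.1, le_trans hx.2 hSJ.2⟩
      have hsplit2 := intervalIntegral.integral_add_adjacent_intervals
        (hewnII x S hxJ hSJ) (hewnII S xh hSJ hxhJ)
      have h1 : 0 ≤ ∫ ξ in S..xh, Real.exp (c * ξ) * wn ξ := by
        apply intervalIntegral.integral_nonneg hxhST.1
        intro ξ hξ
        exact mul_nonneg (Real.exp_pos _).le
          (hwn0 ξ ⟨le_trans hSJ.1 hξ.1, le_trans hξ.2 hxhJ.2⟩)
      have h2 : ∫ ξ in x..S, Real.exp (-(c * x)) * (Real.exp (c * ξ) * wn ξ)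
          ≥ ∫ ξ in x..S, θ * mu * χ * E1' * negpart a ξ := by
        apply intervalIntegral.integral_mono_on hx.2
          (((hnII x S).const_mul _))
          (((hewnII x S hxJ hSJ).const_mul _))
        intro ξ hξ
        have hξJ : ξ ∈ Icc A B := ⟨le_trans hxJ.1 hξ.1, le_trans hξ.2 hSJ.2⟩
        have he1 : E1' ≤ Real.exp (-(c * x)) * Real.exp (c * ξ) := by
          rw [hE1'def]
          apply hexpLo x ξ (S - A)
          rw [abs_le]
          constructor
          · have h9 := hξ.1; have h8 := hx.2; linarith
          · have h9 := hξ.2; have h8 := hx.1; linarith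
        have hm0 : 0 ≤ θ * mu * χ * negpart a ξ :=
          mul_nonneg (mul_nonneg (mul_nonneg hθ.1.le hmu.le) hχ0) (hn0 ξ)
        have hwge := hwnχ ξ hξJ
        calc θ * mu * χ * E1' * negpart a ξ = E1' * (θ * mu * χ * negpart a ξ) := by ring
          _ ≤ (Real.exp (-(c * x)) * Real.exp (c * ξ)) * (θ * mu * χ * negpart a ξ) :=
              mul_le_mul_of_nonneg_right he1 hm0
          _ ≤ (Real.exp (-(c * x)) * Real.exp (c * ξ)) * wn ξ :=
              mul_le_mul_of_nonneg_left hwge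
                (mul_pos (Real.exp_pos _) (Real.exp_pos _)).le
          _ = Real.exp (-(c * x)) * (Real.exp (c * ξ) * wn ξ) := by ring
      have h3 : (∫ ξ in x..S, θ * mu * χ * E1' * negpart a ξ)
          = θ * mu * χ * E1' * ∫ ξ in x..S, negpart a ξ := by
        rw [intervalIntegral.integral_const_mul]
      have h4 : G1 x = Real.exp (-(c * x)) * ((∫ ξ in x..S, Real.exp (c * ξ) * wn ξ)
          + ∫ ξ in S..xh, Real.exp (c * ξ) * wn ξ) := by
        simp only [hG1def]
        rw [hsplit2]
      have h5 : Real.exp (-(c * x)) * ∫ ξ in x..S, Real.exp (c * ξ) * wn ξ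
          = ∫ ξ in x..S, Real.exp (-(c * x)) * (Real.exp (c * ξ) * wn ξ) := by
        rw [intervalIntegral.integral_const_mul]
      have h6 := mul_nonneg (Real.exp_pos (-(c * x))).le h1
      rw [h4, mul_add]
      have h7 := h2
      rw [h3] at h7
      rw [← h5] at h7
      linarith only [h6, h7]
    have hG2hi : ∀ x ∈ Icc A xh, G2 x ≤ θ * lam * Γ * E2' * Y := by
      intro x hx
      have hxJ : x ∈ Icc A B := ⟨hx.1, le_trans hx.2 hxhJ.2⟩
      have h2 : ∫ ξ in x..xh, Real.exp (-(c * x)) * (Real.exp (c * ξ) * wp ξ)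
          ≤ ∫ ξ in x..xh, E2' * (θ * lam * Γ) * pospart a ξ := by
        apply intervalIntegral.integral_mono_on hx.2
          (((hewpII x xh hxJ hxhJ).const_mul _))
          (((hpII x xh).const_mul _))
        intro ξ hξ
        have hξJ : ξ ∈ Icc A B := ⟨le_trans hxJ.1 hξ.1, le_trans hξ.2 hxhJ.2⟩
        have he2 : Real.exp (-(c * x)) * Real.exp (c * ξ) ≤ E2' := by
          rw [hE2'def]
          apply hexpHi x ξ (T - A)
          rw [abs_le]
          constructor
          · have h9 := hξ.1; have h8 := hx.2; have h7 := hxhST.2; linarith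
          · have h9 := hξ.2; have h8 := hx.1; have h7 := hxhST.2; linarith
        have hwle2 := hwpΓ ξ hξJ
        have hm0 : 0 ≤ θ * lam * Γ * pospart a ξ :=
          mul_nonneg (mul_nonneg (mul_nonneg hθ.1.le hlam.le) hΓ0) (hp0 ξ)
        calc Real.exp (-(c * x)) * (Real.exp (c * ξ) * wp ξ)
            = (Real.exp (-(c * x)) * Real.exp (c * ξ)) * wp ξ := by ring
          _ ≤ (Real.exp (-(c * x)) * Real.exp (c * ξ)) * (θ * lam * Γ * pospart a ξ) :=
              mul_le_mul_of_nonneg_left hwle2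
                (mul_pos (Real.exp_pos _) (Real.exp_pos _)).le
          _ ≤ E2' * (θ * lam * Γ * pospart a ξ) := mul_le_mul_of_nonneg_right he2 hm0
          _ = E2' * (θ * lam * Γ) * pospart a ξ := by ring
      have h3 : (∫ ξ in x..xh, E2' * (θ * lam * Γ) * pospart a ξ)
          = E2' * (θ * lam * Γ) * ∫ ξ in x..xh, pospart a ξ := by
        rw [intervalIntegral.integral_const_mul]
      have h4 : E2' * (θ * lam * Γ) * (∫ ξ in x..xh, pospart a ξ)
          ≤ E2' * (θ * lam * Γ) * Y := by
        apply mul_le_mul_of_nonneg_left (hpY2 x xh hxJ.1 hx.2 hxhJ.2)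
        exact mul_nonneg (Real.exp_pos _).le
          (mul_nonneg (mul_nonneg hθ.1.le hlam.le) hΓ0)
      have h5 : G2 x = ∫ ξ in x..xh, Real.exp (-(c * x)) * (Real.exp (c * ξ) * wp ξ) := by
        simp only [hG2def]
        rw [intervalIntegral.integral_const_mul]
      rw [h5]
      calc (∫ ξ in x..xh, Real.exp (-(c * x)) * (Real.exp (c * ξ) * wp ξ))
          ≤ E2' * (θ * lam * Γ) * ∫ ξ in x..xh, pospart a ξ := by rw [← h3]; exact h2
        _ ≤ E2' * (θ * lam * Γ) * Y := h4
        _ = θ * lam * Γ * E2' * Y := by ring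
    have hT2 : (∫ x in A..xh, G2 x) ≤ (T - A) * (θ * lam * Γ * E2' * Y) := by
      have h8 := intervalIntegral.integral_mono_on hxhA.le
        ((hG2cont.mono (uIcc_subset_Icc hAJ hxhJ)).intervalIntegrable)
        (intervalIntegrable_const (μ := volume) (c := θ * lam * Γ * E2' * Y)) hG2hi
      rw [intervalIntegral.integral_const] at h8
      have h9 : (xh - A) * (θ * lam * Γ * E2' * Y) ≤ (T - A) * (θ * lam * Γ * E2' * Y) := by
        apply mul_le_mul_of_nonneg_right _ (mul_nonneg (mul_nonneg (mul_nonneg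
          (mul_nonneg hθ.1.le hlam.le) hΓ0) (Real.exp_pos _).le) hY0)
        linarith only [hxhST.2]
      rw [smul_eq_mul] at h8
      linarith only [h8, h9]
    have hT1 : θ * mu * χ * E1' * XX ≤ ∫ x in A..xh, G1 x := by
      have hicc : ContinuousOn (fun x => ∫ t in x..S, negpart a t) (Icc A B) := by
        have h9 : (fun x : ℝ => ∫ t in x..S, negpart a t)
            = fun x => -(∫ t in S..x, negpart a t) := by
          funext x; exact intervalIntegral.integral_symm S x
        rw [h9]
        exact ((intervalIntegral.continuous_primitive hnII S).neg).continuousOn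
      have hsplitF : (∫ x in A..xh, G1 x) = (∫ x in A..S, G1 x) + ∫ x in S..xh, G1 x :=
        (intervalIntegral.integral_add_adjacent_intervals
          ((hG1cont.mono (uIcc_subset_Icc hAJ hSJ)).intervalIntegrable)
          ((hG1cont.mono (uIcc_subset_Icc hSJ hxhJ)).intervalIntegrable)).symm
      have hG1pos : 0 ≤ ∫ x in S..xh, G1 x := by
        apply intervalIntegral.integral_nonneg hxhST.1
        intro x hx
        have hxJ : x ∈ Icc A B := ⟨le_trans hSJ.1 hx.1, le_trans hx.2 hxhJ.2⟩
        simp only [hG1def]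
        apply mul_nonneg (Real.exp_pos _).le
        apply intervalIntegral.integral_nonneg hx.2
        intro ξ hξ
        exact mul_nonneg (Real.exp_pos _).le
          (hwn0 ξ ⟨le_trans hxJ.1 hξ.1, le_trans hξ.2 hxhJ.2⟩)
      have hmid : (∫ x in A..S, θ * mu * χ * E1' * (∫ t in x..S, negpart a t))
          ≤ ∫ x in A..S, G1 x := by
        apply intervalIntegral.integral_mono_on hAS.le
          (((hicc.mono (uIcc_subset_Icc hAJ hSJ)).intervalIntegrable).const_mul _)
          ((hG1cont.mono (uIcc_subset_Icc hAJ hSJ)).intervalIntegrable)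
        exact hG1lo
      have heq2 : (∫ x in A..S, θ * mu * χ * E1' * (∫ t in x..S, negpart a t))
          = θ * mu * χ * E1' * XX := by
        rw [intervalIntegral.integral_const_mul, hXXdef,
          intervalIntegral.integral_of_le hAS.le, integral_Icc_eq_integral_Ioc]
      linarith only [hsplitF, hG1pos, hmid, heq2]
    have hQ : u A - R = (∫ x in A..xh, G1 x) - ∫ x in A..xh, G2 x := by
      rw [← hsub]
      have h9 : ∫ x in A..xh, -(u' x) = -∫ x in A..xh, u' x := by
        rw [intervalIntegral.integral_neg]
      rw [h9, ← hftcA, huxh]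
      ring
    have hfin1 : θ * mu * χ * E1' * XX - (T - A) * (θ * lam * Γ * E2' * Y) ≤ u A - R := by
      rw [hQ]
      linarith only [hT1, hT2]
    have hgoal : R + θ * (mu * XL * χ * E1' - lam * Y * Γ * E2' * (T - A))
        = R + (θ * mu * χ * E1' * XX - (T - A) * (θ * lam * Γ * E2' * Y)) := by
      rw [hXeq]; ring
    rw [ge_iff_le, hgoal]
    linarith only [hfin1]
end
end

section
/- Let c ∈ ℝ, let a be a P-periodic locally integrable weight satisfying (a*), and let g : [0,1] → ℝ be continuous satisfying (g*). Let λ, μ > 0, α ≥ 0, and let ρ ∈ (0,1). Let v be the indicator function of ⋃_{i∈𝓘} I⁺_i for a non-empty set 𝓘 ⊆ {1,…,m}. If α > (2ρ/ε)e^{|c||I⁺_j|} + 2|c|ρ)/(τ_j − σ_j − 2ε) for some j ∈ 𝓘 and some ε ∈ (0,(τ_j−σ_j)/2), then there is no non-negative P-periodic solution u of u'' + cu' + (λa⁺(x) − μa⁻(x))g(u) + αv(x) = 0 with u(x) ≤ ρ for all x ∈ ⋃_{i∈𝓘} I⁺_i. In particular, for α sufficiently large no such solution exists. -/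
open MeasureTheory Set Filter Topology

noncomputable section

/-- Verification of hypothesis (H₂): for `α` large enough, the problem with forcing
term `α·𝟙_{⋃_{i∈𝓘} I⁺_i}` has no non-negative periodic solution with `u ≤ ρ` on
`⋃_{i∈𝓘} I⁺_i`. -/
theorem statement17 (c P : ℝ) (m : ℕ) (a : ℝ → ℝ) (σ τ : ℕ → ℝ)
    (ha : AStar P m a σ τ)
    (g : ℝ → ℝ) (hg : ContinuousOn g (Icc 0 1)) (hgs : Gstar g)
    (lam mu α ρ : ℝ) (hlam : 0 < lam) (hmu : 0 < mu) (hα : 0 ≤ α)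
    (hρ : ρ ∈ Ioo (0:ℝ) 1)
    (I : Finset ℕ) (hIne : I.Nonempty) (hIsub : I ⊆ Finset.Icc 1 m)
    (j : ℕ) (hj : j ∈ I) (ε : ℝ) (hε : 0 < ε) (hε2 : ε < (τ j - σ j) / 2)
    (hαbig : (2 * ρ / ε * Real.exp (|c| * (τ j - σ j)) + 2 * |c| * ρ) /
        (τ j - σ j - 2 * ε) < α) :
    ¬ ∃ u u' : ℝ → ℝ,
        CaraSol c (fun x v => awt a lam mu x * g v +
            α * Set.indicator (⋃ i ∈ I, Icc (σ i) (τ i)) (fun _ => (1:ℝ)) x)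
          u u' (Icc 0 P) ∧
        u 0 = u P ∧ u' 0 = u' P ∧
        (∀ x ∈ Icc (0:ℝ) P, 0 ≤ u x) ∧
        (∀ x ∈ ⋃ i ∈ I, Icc (σ i) (τ i), u x ≤ ρ) := by
  rintro ⟨u, u', ⟨hderiv, hu'cont, u'', hftc, hae⟩, -, -, hpos, hle⟩
  have hjm' : j ∈ Finset.Icc 1 m := hIsub hj
  have hj1 : 1 ≤ j := (Finset.mem_Icc.mp hjm').1
  have hjm : j ≤ m := (Finset.mem_Icc.mp hjm').2
  -- monotonicity of σ
  have hmono : ∀ q, q ≤ m + 1 → ∀ p, 1 ≤ p → p ≤ q → σ p ≤ σ q := by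
    intro q
    induction q with
    | zero => intro _ p hp hpq; omega
    | succ n ih =>
      intro hn p hp hpq
      rcases Nat.lt_or_ge p (n + 1) with h | h
      · have hn1 : 1 ≤ n := by omega
        have hnm : n ∈ Finset.Icc 1 m := Finset.mem_Icc.mpr ⟨hn1, by omega⟩
        have h1 : σ p ≤ σ n := ih (by omega) p hp (by omega)
        have h2 : σ n < σ (n + 1) := lt_trans (ha.lt_στ n hnm) (ha.lt_τσ n hnm)
        linarith
      · have hpn : p = n + 1 := by omega
        subst hpn; exact le_rfl
  have hσj0 : 0 ≤ σ j := by
    have h := hmono j (by omega) 1 le_rfl hj1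
    rwa [ha.σ_one] at h
  have hστ : σ j < τ j := ha.lt_στ j hjm'
  have hτjP : τ j < P := by
    have h1 : τ j < σ (j + 1) := ha.lt_τσ j hjm'
    have h2 : σ (j + 1) ≤ σ (m + 1) := hmono (m + 1) le_rfl (j + 1) (by omega) (by omega)
    rw [ha.σ_last] at h2; linarith
  have hsubjP : Icc (σ j) (τ j) ⊆ Icc (0:ℝ) P := Icc_subset_Icc hσj0 hτjP.le
  set U : Set ℝ := ⋃ i ∈ I, Icc (σ i) (τ i) with hU
  have hUsub : Icc (σ j) (τ j) ⊆ U := fun x hx => Set.mem_biUnion hj hx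
  set ind : ℝ → ℝ := U.indicator (fun _ => (1:ℝ)) with hind
  -- u in [0, ρ] on I⁺_j
  have hu01 : ∀ x ∈ Icc (σ j) (τ j), u x ∈ Icc (0:ℝ) ρ := fun x hx =>
    ⟨hpos x (hsubjP hx), hle x (hUsub hx)⟩
  -- continuity / differentiability
  have hucont : ContinuousOn u (Icc 0 P) := fun x hx => (hderiv x hx).continuousWithinAt
  have hDA : ∀ x ∈ Ioo (0:ℝ) P, HasDerivAt u (u' x) x := fun x hx =>
    (hderiv x (Ioo_subset_Icc_self hx)).hasDerivAt (Icc_mem_nhds hx.1 hx.2)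
  -- MVT on left subinterval
  have hslt1 : σ j < σ j + ε := by linarith
  obtain ⟨ξ₁, hξ₁mem, hξ₁⟩ := exists_hasDerivAt_eq_slope u u' hslt1
    (hucont.mono (Icc_subset_Icc hσj0 (by linarith)))
    (fun x hx => hDA x ⟨lt_of_le_of_lt hσj0 hx.1, by linarith [hx.2]⟩)
  have hslt2 : τ j - ε < τ j := by linarith
  obtain ⟨ξ₂, hξ₂mem, hξ₂⟩ := exists_hasDerivAt_eq_slope u u' hslt2
    (hucont.mono (Icc_subset_Icc (by linarith) hτjP.le))
    (fun x hx => hDA x ⟨by linarith [hx.1], lt_trans hx.2 hτjP⟩)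
  have hle12 : ξ₁ ≤ ξ₂ := by
    have := hξ₁mem.2; have := hξ₂mem.1; linarith
  have hξ₁σ : σ j < ξ₁ := hξ₁mem.1
  have hξ₂τ : ξ₂ < τ j := hξ₂mem.2
  -- bounds on u' ξ₁, u' ξ₂
  have hval1 : u (σ j) ∈ Icc (0:ℝ) ρ := hu01 _ ⟨le_rfl, hστ.le⟩
  have hval2 : u (σ j + ε) ∈ Icc (0:ℝ) ρ := hu01 _ ⟨by linarith, by linarith⟩
  have hval3 : u (τ j - ε) ∈ Icc (0:ℝ) ρ := hu01 _ ⟨by linarith, by linarith⟩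
  have hval4 : u (τ j) ∈ Icc (0:ℝ) ρ := hu01 _ ⟨hστ.le, le_rfl⟩
  have hbd1 : |u' ξ₁| ≤ ρ / ε := by
    rw [hξ₁, show σ j + ε - σ j = ε by ring, abs_div, abs_of_pos hε]
    apply div_le_div_of_nonneg_right ?_ hε.le
    · exact abs_le.mpr ⟨by linarith [hval1.1, hval1.2, hval2.1, hval2.2],
        by linarith [hval1.1, hval1.2, hval2.1, hval2.2]⟩
  have hbd2 : |u' ξ₂| ≤ ρ / ε := by
    rw [hξ₂, show τ j - (τ j - ε) = ε by ring, abs_div, abs_of_pos hε]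
    apply div_le_div_of_nonneg_right ?_ hε.le
    · exact abs_le.mpr ⟨by linarith [hval3.1, hval3.2, hval4.1, hval4.2],
        by linarith [hval3.1, hval3.2, hval4.1, hval4.2]⟩
  -- subset facts
  have hsub12 : Icc ξ₁ ξ₂ ⊆ Icc (σ j) (τ j) := Icc_subset_Icc hξ₁σ.le hξ₂τ.le
  have hsub0P : Icc ξ₁ ξ₂ ⊆ Icc (0:ℝ) P := hsub12.trans hsubjP
  have hξ₁0P : ξ₁ ∈ Icc (0:ℝ) P := hsub0P ⟨le_rfl, hle12⟩
  have hξ₂0P : ξ₂ ∈ Icc (0:ℝ) P := hsub0P ⟨hle12, le_rfl⟩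
  -- FTC for u
  have hu'int : IntervalIntegrable u' volume ξ₁ ξ₂ :=
    (hu'cont.mono hsub0P).intervalIntegrable_of_Icc hle12
  have hFTCu : ∫ x in ξ₁..ξ₂, u' x = u ξ₂ - u ξ₁ := by
    apply intervalIntegral.integral_eq_sub_of_hasDerivAt (fun x hx => ?_) hu'int
    rw [uIcc_of_le hle12] at hx
    exact hDA x ⟨lt_of_le_of_lt' hx.1 (lt_of_le_of_lt hσj0 hξ₁σ),
      lt_of_le_of_lt hx.2 (lt_trans hξ₂τ hτjP)⟩
  -- indicator integral
  have hindeq : Set.EqOn ind (fun _ => (1:ℝ)) (Icc ξ₁ ξ₂) := fun x hx =>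
    Set.indicator_of_mem (hUsub (hsub12 hx)) _
  have hindval : ∫ x in ξ₁..ξ₂, ind x = ξ₂ - ξ₁ := by
    rw [intervalIntegral.integral_congr (g := fun _ => (1:ℝ))
      (by rw [uIcc_of_le hle12]; exact hindeq)]
    simp
  have hindInt : IntervalIntegrable ind volume ξ₁ ξ₂ := by
    rw [intervalIntegrable_iff_integrableOn_Ioc_of_le hle12]
    refine MeasureTheory.IntegrableOn.congr_fun
      (f := fun _ => (1:ℝ)) ?_ ?_ measurableSet_Ioc
    · exact (integrableOn_const_iff).mpr (Or.inr measure_Ioc_lt_top)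
    · intro x hx
      exact (hindeq (Set.Ioc_subset_Icc_self hx)).symm
  -- integrability of awt * g∘u
  have haInt : IntegrableOn a (Icc ξ₁ ξ₂) volume :=
    ha.locint.integrableOn_isCompact isCompact_Icc
  have hawtInt : IntegrableOn (awt a lam mu) (Icc ξ₁ ξ₂) volume := by
    have h1 := (haInt.pos_part.const_mul lam).sub (haInt.neg.pos_part.const_mul mu)
    exact h1
  have hucont2 : ContinuousOn u (Icc ξ₁ ξ₂) := hucont.mono hsub0P
  have hgucont : ContinuousOn (fun x => g (u x)) (Icc ξ₁ ξ₂) :=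
    hg.comp hucont2 (fun x hx => ⟨(hu01 x (hsub12 hx)).1,
      le_trans (hu01 x (hsub12 hx)).2 hρ.2.le⟩)
  obtain ⟨C, hC⟩ := isCompact_Icc.exists_bound_of_continuousOn hgucont
  have hprod : IntegrableOn (fun x => awt a lam mu x * g (u x)) (Icc ξ₁ ξ₂) volume := by
    have h2 := hawtInt.bdd_mul (c := C)
      (hgucont.aestronglyMeasurable measurableSet_Icc)
      ((ae_restrict_iff' measurableSet_Icc).mpr (Filter.Eventually.of_forall hC))
    simpa [mul_comm, IntegrableOn] using h2
  have hprodInt : IntervalIntegrable (fun x => awt a lam mu x * g (u x)) volume ξ₁ ξ₂ := by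
    rw [intervalIntegrable_iff_integrableOn_Ioc_of_le hle12]
    exact hprod.mono_set Ioc_subset_Icc_self
  -- nonnegativity of ∫ awt g(u)
  have hgu_nn : ∀ x ∈ Icc ξ₁ ξ₂, 0 ≤ g (u x) := by
    intro x hx
    have hux := hu01 x (hsub12 hx)
    rcases eq_or_lt_of_le hux.1 with h0 | h0
    · rw [← h0, hgs.1]
    · exact (hgs.2.2 (u x) ⟨h0, lt_of_le_of_lt hux.2 hρ.2⟩).le
  have hSnn : 0 ≤ ∫ x in ξ₁..ξ₂, awt a lam mu x * g (u x) := by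
    apply intervalIntegral.integral_nonneg_of_ae_restrict hle12
    have haepos : ∀ᵐ x ∂(volume.restrict (Icc ξ₁ ξ₂)), 0 ≤ a x :=
      ae_mono (Measure.restrict_mono hsub12 le_rfl) (ha.pos_ae j hjm')
    have hmemae : ∀ᵐ x ∂(volume.restrict (Icc ξ₁ ξ₂)), x ∈ Icc ξ₁ ξ₂ :=
      ae_restrict_mem measurableSet_Icc
    filter_upwards [haepos, hmemae] with x hax hx
    have hawt : awt a lam mu x = lam * a x := by
      simp [awt, pospart, negpart, max_eq_left hax, max_eq_right (neg_nonpos.mpr hax)]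
    rw [Pi.zero_apply, hawt]
    exact mul_nonneg (mul_nonneg hlam.le hax) (hgu_nn x hx)
  -- transfer ODE to interval and compute ∫ u''
  have haeI : ∀ᵐ x ∂(volume.restrict (Ioc ξ₁ ξ₂)),
      u'' x + c * u' x + (awt a lam mu x * g (u x) + α * ind x) = 0 :=
    ae_mono (Measure.restrict_mono (fun x hx => hsub0P (Ioc_subset_Icc_self hx)) le_rfl) hae
  have hintcongr : ∫ x in ξ₁..ξ₂, u'' x =
      ∫ x in ξ₁..ξ₂, (-(c * u' x + (awt a lam mu x * g (u x) + α * ind x))) := by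
    apply intervalIntegral.integral_congr_ae
    rw [uIoc_of_le hle12]
    filter_upwards [(ae_restrict_iff' measurableSet_Ioc).mp haeI] with x hx hmem
    have := hx hmem; linarith
  have h1int : IntervalIntegrable (fun x => c * u' x) volume ξ₁ ξ₂ := hu'int.const_mul c
  have h3int : IntervalIntegrable (fun x => α * ind x) volume ξ₁ ξ₂ := hindInt.const_mul α
  have hkey : u' ξ₂ - u' ξ₁ =
      -(c * (u ξ₂ - u ξ₁) + ((∫ x in ξ₁..ξ₂, awt a lam mu x * g (u x)) + α * (ξ₂ - ξ₁))) := by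
    rw [hftc ξ₁ hξ₁0P ξ₂ hξ₂0P, hintcongr, intervalIntegral.integral_neg,
      intervalIntegral.integral_add h1int (hprodInt.add h3int),
      intervalIntegral.integral_add hprodInt h3int,
      intervalIntegral.integral_const_mul, intervalIntegral.integral_const_mul,
      hFTCu, hindval]
  -- final estimates
  set S := ∫ x in ξ₁..ξ₂, awt a lam mu x * g (u x) with hS
  have habs1 : -(u' ξ₂ - u' ξ₁) ≤ 2 * ρ / ε := by
    have h1 := neg_abs_le (u' ξ₁); have h2 := neg_abs_le (u' ξ₂)
    have h3 := le_abs_self (u' ξ₁); have h4 := le_abs_self (u' ξ₂)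
    have : 2 * ρ / ε = ρ / ε + ρ / ε := by ring
    linarith
  have habs2 : -(c * (u ξ₂ - u ξ₁)) ≤ |c| * ρ := by
    have hA := hu01 ξ₁ ⟨hξ₁σ.le, by linarith⟩
    have hB := hu01 ξ₂ ⟨by linarith, hξ₂τ.le⟩
    have h5 : |c * (u ξ₂ - u ξ₁)| ≤ |c| * ρ := by
      rw [abs_mul]
      exact mul_le_mul_of_nonneg_left
        (abs_le.mpr ⟨by linarith [hA.1, hA.2, hB.1, hB.2],
          by linarith [hA.1, hA.2, hB.1, hB.2]⟩) (abs_nonneg c)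
    linarith [neg_abs_le (c * (u ξ₂ - u ξ₁))]
  have hmain : α * (ξ₂ - ξ₁) ≤ 2 * ρ / ε + |c| * ρ := by
    have : α * (ξ₂ - ξ₁) = -(u' ξ₂ - u' ξ₁) - c * (u ξ₂ - u ξ₁) - S := by
      rw [hS]; linarith [hkey]
    linarith
  have hgap : 0 < τ j - σ j - 2 * ε := by linarith
  have hstep : α * (τ j - σ j - 2 * ε) ≤ α * (ξ₂ - ξ₁) := by
    apply mul_le_mul_of_nonneg_left ?_ hα
    linarith [hξ₁mem.2, hξ₂mem.1]
  have hexp : 1 ≤ Real.exp (|c| * (τ j - σ j)) :=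
    Real.one_le_exp (mul_nonneg (abs_nonneg c) (by linarith))
  have hmul : 2 * ρ / ε ≤ 2 * ρ / ε * Real.exp (|c| * (τ j - σ j)) :=
    le_mul_of_one_le_right (div_nonneg (by linarith [hρ.1]) hε.le) hexp
  have hfin : 2 * ρ / ε * Real.exp (|c| * (τ j - σ j)) + 2 * |c| * ρ
      < α * (τ j - σ j - 2 * ε) := (div_lt_iff₀ hgap).mp hαbig
  have hcρ : 0 ≤ |c| * ρ := mul_nonneg (abs_nonneg c) hρ.1.le
  linarith
end
end
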